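/- arXiv:2003.08150 — 12 statements merged into one kernel-verified Lean document; each statement's English description precedes it below -/
import Mathlib

section
/- Let all parameters Π, β, r_Q, r_A, r_J, γ1, γ2, k1, k2, σ1, σ2, σ3, σ4, δ, μ be positive reals and p ∈ (0,1). Suppose S, E, Q, A, I, J, R : ℝ → ℝ are differentiable functions satisfying on [0, T] the system S' = Π − S(βI + r_QβQ + r_AβA + r_JβJ)/N − μS, E' = S(βI + r_QβQ + r_AβA + r_JβJ)/N − (γ1+k1+μ)E, Q' = γ1E − (k2+σ1+μ)Q, A' = p k1 E − (σ2+μ)A, I' = (1−p)k1E − (γ2+σ3+μ)I, J' = k2Q + γ2I − (δ+σ4+μ)J, R' = σ1Q + σ2A + σ3I + σ4J − μR, where N = S+E+Q+A+I+J+R is assumed positive on [0, T]. If S(0), E(0), Q(0), A(0), I(0), J(0), R(0) are all nonnegative, then S(t), E(t), Q(t), A(t), I(t), J(t), R(t) are nonnegative for all t ∈ [0, T]. -/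
open Set Filter Real Topology

lemma left_min_deriv_nonpos' {f : ℝ → ℝ} {f' t0 : ℝ}
    (hf : HasDerivAt f f' t0) (h0 : 0 < t0)
    (h : ∀ t ∈ Set.Ioo (0:ℝ) t0, f t0 ≤ f t) : f' ≤ 0 := by
  have h1 : Tendsto (slope f t0) (𝓝[<] t0) (𝓝 f') :=
    (hasDerivAt_iff_tendsto_slope.mp hf).mono_left
      (nhdsWithin_mono _ fun x hx => ne_of_lt hx)
  refine le_of_tendsto h1 ?_
  filter_upwards [Ioo_mem_nhdsLT_of_mem (Set.mem_Ioc.mpr ⟨h0, le_refl t0⟩)] with t ht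
  have h2 : f t0 ≤ f t := h t ht
  have h3 : t - t0 < 0 := sub_neg.mpr ht.2
  rw [slope_def_field]
  exact div_nonpos_of_nonneg_of_nonpos (by linarith) h3.le


lemma sum4_lb (b1 b2 b3 b4 x1 x2 x3 x4 d : ℝ) (hb1 : 0 ≤ b1) (hb2 : 0 ≤ b2)
    (hb3 : 0 ≤ b3) (hb4 : 0 ≤ b4) (h1 : -d ≤ x1) (h2 : -d ≤ x2) (h3 : -d ≤ x3)
    (h4 : -d ≤ x4) : -((b1 + b2 + b3 + b4) * d) ≤ b1 * x1 + b2 * x2 + b3 * x3 + b4 * x4 := by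
  nlinarith [mul_le_mul_of_nonneg_left h1 hb1, mul_le_mul_of_nonneg_left h2 hb2,
    mul_le_mul_of_nonneg_left h3 hb3, mul_le_mul_of_nonneg_left h4 hb4]

lemma sum4_ub (b1 b2 b3 b4 x1 x2 x3 x4 d : ℝ) (hb1 : 0 ≤ b1) (hb2 : 0 ≤ b2)
    (hb3 : 0 ≤ b3) (hb4 : 0 ≤ b4) (h1 : x1 ≤ d) (h2 : x2 ≤ d) (h3 : x3 ≤ d)
    (h4 : x4 ≤ d) : b1 * x1 + b2 * x2 + b3 * x3 + b4 * x4 ≤ (b1 + b2 + b3 + b4) * d := by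
  nlinarith [mul_le_mul_of_nonneg_left h1 hb1, mul_le_mul_of_nonneg_left h2 hb2,
    mul_le_mul_of_nonneg_left h3 hb3, mul_le_mul_of_nonneg_left h4 hb4]

lemma smul_lb (s L Cb B m : ℝ) (hCb : 0 < Cb) (hB : 0 ≤ B) (hm : 0 < m)
    (hsB : s ≤ B) (hsm : -m ≤ s) (hLub : L ≤ Cb * B) (hLlb : -(Cb * m) ≤ L) :
    -(m * (Cb * B)) ≤ s * L := by
  rcases le_or_gt 0 s with h | h
  · nlinarith [mul_le_mul_of_nonneg_left hLlb h,
      mul_le_mul_of_nonneg_right hsB (by positivity : (0:ℝ) ≤ Cb * m)]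
  · rcases le_or_gt 0 L with hL | hL
    · nlinarith [mul_le_mul_of_nonneg_right hsm hL,
        mul_le_mul_of_nonneg_left hLub hm.le]
    · nlinarith [mul_pos_of_neg_of_neg h hL]

lemma case_lin (Ppos c K M m X : ℝ) (hP : 0 ≤ Ppos) (hc : 0 < c) (hm : 0 < m)
    (hMK : M ≤ K) (h1 : -(m * M) ≤ X) : -(K * m) < Ppos + X - c * -m := by
  nlinarith [mul_le_mul_of_nonneg_right hMK hm.le, mul_pos hc hm]

lemma case_gen4 (a1 a2 a3 a4 c K m e1 e2 e3 e4 : ℝ) (ha1 : 0 ≤ a1) (ha2 : 0 ≤ a2)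
    (ha3 : 0 ≤ a3) (ha4 : 0 ≤ a4) (hc : 0 < c) (hm : 0 < m) (hK : a1 + a2 + a3 + a4 ≤ K)
    (he1 : -m ≤ e1) (he2 : -m ≤ e2) (he3 : -m ≤ e3) (he4 : -m ≤ e4) :
    -(K * m) < a1 * e1 + a2 * e2 + a3 * e3 + a4 * e4 - c * (-m) := by
  nlinarith [mul_le_mul_of_nonneg_left he1 ha1, mul_le_mul_of_nonneg_left he2 ha2,
    mul_le_mul_of_nonneg_left he3 ha3, mul_le_mul_of_nonneg_left he4 ha4,
    mul_le_mul_of_nonneg_right hK hm.le, mul_pos hc hm]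

set_option maxHeartbeats 2000000 in
/-- Nonnegativity (positivity) of solutions of the COVID-19 model (2.1) on [0, T]. -/
theorem stmt_0
    (Pi beta rQ rA rJ g1 g2 k1 k2 s1 s2 s3 s4 delta mu p T : ℝ)
    (hPi : 0 < Pi) (hbeta : 0 < beta) (hrQ : 0 < rQ) (hrA : 0 < rA) (hrJ : 0 < rJ)
    (hg1 : 0 < g1) (hg2 : 0 < g2) (hk1 : 0 < k1) (hk2 : 0 < k2)
    (hs1 : 0 < s1) (hs2 : 0 < s2) (hs3 : 0 < s3) (hs4 : 0 < s4)
    (hdelta : 0 < delta) (hmu : 0 < mu) (hp0 : 0 < p) (hp1 : p < 1)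
    (S E Q A I J R : ℝ → ℝ)
    (hS : Differentiable ℝ S) (hE : Differentiable ℝ E) (hQ : Differentiable ℝ Q)
    (hA : Differentiable ℝ A) (hI : Differentiable ℝ I) (hJ : Differentiable ℝ J)
    (hR : Differentiable ℝ R)
    (hNpos : ∀ t ∈ Set.Icc (0 : ℝ) T,
      0 < S t + E t + Q t + A t + I t + J t + R t)
    (hSode : ∀ t ∈ Set.Icc (0 : ℝ) T, deriv S t =
      Pi - S t * (beta * I t + rQ * beta * Q t + rA * beta * A t + rJ * beta * J t) /
        (S t + E t + Q t + A t + I t + J t + R t) - mu * S t)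
    (hEode : ∀ t ∈ Set.Icc (0 : ℝ) T, deriv E t =
      S t * (beta * I t + rQ * beta * Q t + rA * beta * A t + rJ * beta * J t) /
        (S t + E t + Q t + A t + I t + J t + R t) - (g1 + k1 + mu) * E t)
    (hQode : ∀ t ∈ Set.Icc (0 : ℝ) T, deriv Q t = g1 * E t - (k2 + s1 + mu) * Q t)
    (hAode : ∀ t ∈ Set.Icc (0 : ℝ) T, deriv A t = p * k1 * E t - (s2 + mu) * A t)
    (hIode : ∀ t ∈ Set.Icc (0 : ℝ) T, deriv I t =
      (1 - p) * k1 * E t - (g2 + s3 + mu) * I t)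
    (hJode : ∀ t ∈ Set.Icc (0 : ℝ) T, deriv J t =
      k2 * Q t + g2 * I t - (delta + s4 + mu) * J t)
    (hRode : ∀ t ∈ Set.Icc (0 : ℝ) T, deriv R t =
      s1 * Q t + s2 * A t + s3 * I t + s4 * J t - mu * R t)
    (hS0 : 0 ≤ S 0) (hE0 : 0 ≤ E 0) (hQ0 : 0 ≤ Q 0) (hA0 : 0 ≤ A 0)
    (hI0 : 0 ≤ I 0) (hJ0 : 0 ≤ J 0) (hR0 : 0 ≤ R 0) :
    ∀ t ∈ Set.Icc (0 : ℝ) T,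
      0 ≤ S t ∧ 0 ≤ E t ∧ 0 ≤ Q t ∧ 0 ≤ A t ∧ 0 ≤ I t ∧ 0 ≤ J t ∧ 0 ≤ R t := by
  rcases lt_or_ge T 0 with hT | hT
  · intro t ht
    exact absurd (ht.1.trans ht.2) (not_le.mpr hT)
  -- continuity facts
  have hcS := hS.continuous
  have hcE := hE.continuous
  have hcQ := hQ.continuous
  have hcA := hA.continuous
  have hcI := hI.continuous
  have hcJ := hJ.continuous
  have hcR := hR.continuous
  -- global bounds on [0,T]
  obtain ⟨BS, hBS⟩ := isCompact_Icc.exists_bound_of_continuousOn (hcS.continuousOn (s := Set.Icc (0:ℝ) T))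
  obtain ⟨BE, hBE⟩ := isCompact_Icc.exists_bound_of_continuousOn (hcE.continuousOn (s := Set.Icc (0:ℝ) T))
  obtain ⟨BQ, hBQ⟩ := isCompact_Icc.exists_bound_of_continuousOn (hcQ.continuousOn (s := Set.Icc (0:ℝ) T))
  obtain ⟨BA, hBA⟩ := isCompact_Icc.exists_bound_of_continuousOn (hcA.continuousOn (s := Set.Icc (0:ℝ) T))
  obtain ⟨BI, hBI⟩ := isCompact_Icc.exists_bound_of_continuousOn (hcI.continuousOn (s := Set.Icc (0:ℝ) T))
  obtain ⟨BJ, hBJ⟩ := isCompact_Icc.exists_bound_of_continuousOn (hcJ.continuousOn (s := Set.Icc (0:ℝ) T))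
  obtain ⟨BR, hBR⟩ := isCompact_Icc.exists_bound_of_continuousOn (hcR.continuousOn (s := Set.Icc (0:ℝ) T))
  set B : ℝ := ((((((BS ⊔ BE) ⊔ BQ) ⊔ BA) ⊔ BI) ⊔ BJ) ⊔ BR) ⊔ 0 with hBdef
  have hB : ∀ t ∈ Set.Icc (0:ℝ) T, |S t| ≤ B ∧ |E t| ≤ B ∧ |Q t| ≤ B ∧ |A t| ≤ B
      ∧ |I t| ≤ B ∧ |J t| ≤ B ∧ |R t| ≤ B := by
    intro t ht
    have h1 := hBS t ht; have h2 := hBE t ht; have h3 := hBQ t ht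
    have h4 := hBA t ht; have h5 := hBI t ht; have h6 := hBJ t ht
    have h7 := hBR t ht
    simp only [Real.norm_eq_abs] at h1 h2 h3 h4 h5 h6 h7
    refine ⟨?_, ?_, ?_, ?_, ?_, ?_, ?_⟩ <;>
      simp only [hBdef, le_sup_iff] <;> tauto
  have hB0 : 0 ≤ B := by rw [hBdef]; exact le_sup_right
  -- positive lower bound on N
  have hNcont : Continuous fun t => S t + E t + Q t + A t + I t + J t + R t := by
    fun_prop
  obtain ⟨tm, htm, hNmin⟩ := isCompact_Icc.exists_isMinOn (Set.nonempty_Icc.mpr hT)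
    (hNcont.continuousOn (s := Set.Icc (0:ℝ) T))
  set Nm : ℝ := S tm + E tm + Q tm + A tm + I tm + J tm + R tm with hNmdef
  have hNm : 0 < Nm := hNpos tm htm
  have hNmle : ∀ t ∈ Set.Icc (0:ℝ) T, Nm ≤ S t + E t + Q t + A t + I t + J t + R t :=
    fun t ht => isMinOn_iff.mp hNmin t ht
  -- constants
  set Cb : ℝ := beta + rQ * beta + rA * beta + rJ * beta with hCbdef
  have hCb : 0 < Cb := by rw [hCbdef]; positivity
  set M : ℝ := Cb * B / Nm with hMdef
  have hM : 0 ≤ M := by rw [hMdef]; positivity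
  set K : ℝ := M + g1 + k1 + k2 + g2 + s1 + s2 + s3 + s4 + 1 with hKdef
  have hKM : 0 ≤ K - M - 1 := by rw [hKdef]; linarith
  -- division helper
  have hdiv : ∀ c x n' : ℝ, 0 ≤ c → Nm ≤ n' → -c ≤ x → -(c / Nm) ≤ x / n' := by
    intro c x n' hc hn' hx
    have hn'0 : 0 < n' := lt_of_lt_of_le hNm hn'
    rcases le_or_gt 0 x with h | h
    · have h1 : 0 ≤ x / n' := div_nonneg h hn'0.le
      have h2 : 0 ≤ c / Nm := div_nonneg hc hNm.le
      linarith
    · rw [show -(c / Nm) = -c / Nm by ring, div_le_div_iff₀ hNm hn'0]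
      have a1 : -c * n' ≤ x * n' := mul_le_mul_of_nonneg_right hx hn'0.le
      have a2 : x * n' ≤ x * Nm := mul_le_mul_of_nonpos_left hn' h.le
      linarith
  -- the key perturbation lemma
  have key : ∀ ε : ℝ, 0 < ε → ¬ ∃ t, t ∈ Set.Icc (0:ℝ) T ∧
      (S t + ε * Real.exp (K * t) ≤ 0 ∨ E t + ε * Real.exp (K * t) ≤ 0 ∨
       Q t + ε * Real.exp (K * t) ≤ 0 ∨ A t + ε * Real.exp (K * t) ≤ 0 ∨
       I t + ε * Real.exp (K * t) ≤ 0 ∨ J t + ε * Real.exp (K * t) ≤ 0 ∨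
       R t + ε * Real.exp (K * t) ≤ 0) := by
    intro ε hε hcon
    have hgc : Continuous fun t : ℝ => ε * Real.exp (K * t) := by fun_prop
    set Bad : Set ℝ := {t | t ∈ Set.Icc (0:ℝ) T ∧
      (S t + ε * Real.exp (K * t) ≤ 0 ∨ E t + ε * Real.exp (K * t) ≤ 0 ∨
       Q t + ε * Real.exp (K * t) ≤ 0 ∨ A t + ε * Real.exp (K * t) ≤ 0 ∨
       I t + ε * Real.exp (K * t) ≤ 0 ∨ J t + ε * Real.exp (K * t) ≤ 0 ∨
       R t + ε * Real.exp (K * t) ≤ 0)} with hBaddef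
    have hBadne : Bad.Nonempty := by
      obtain ⟨t1, ht1, hd⟩ := hcon
      exact ⟨t1, ht1, hd⟩
    have hBadbdd : BddBelow Bad := ⟨0, fun b hb => hb.1.1⟩
    have hBadclosed : IsClosed Bad := by
      have : Bad = Set.Icc (0:ℝ) T ∩
          ({t | S t + ε * Real.exp (K * t) ≤ 0} ∪ {t | E t + ε * Real.exp (K * t) ≤ 0} ∪
           {t | Q t + ε * Real.exp (K * t) ≤ 0} ∪ {t | A t + ε * Real.exp (K * t) ≤ 0} ∪
           {t | I t + ε * Real.exp (K * t) ≤ 0} ∪ {t | J t + ε * Real.exp (K * t) ≤ 0} ∪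
           {t | R t + ε * Real.exp (K * t) ≤ 0}) := by
        ext t
        simp only [hBaddef, Set.mem_setOf_eq, Set.mem_inter_iff, Set.mem_union]
        tauto
      rw [this]
      refine isClosed_Icc.inter ?_
      repeat' apply IsClosed.union
      all_goals exact isClosed_le (by fun_prop) continuous_const
    set t0 : ℝ := sInf Bad with ht0def
    have ht0Bad : t0 ∈ Bad := hBadclosed.csInf_mem hBadne hBadbdd
    have ht0Icc : t0 ∈ Set.Icc (0:ℝ) T := ht0Bad.1
    have ht0dis := ht0Bad.2
    have ht0pos : 0 < t0 := by
      rcases lt_or_eq_of_le ht0Icc.1 with h | h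
      · exact h
      · exfalso
        rw [← h] at ht0dis
        rcases ht0dis with hd | hd | hd | hd | hd | hd | hd <;>
          (rw [mul_zero, Real.exp_zero, mul_one] at hd; linarith)
    -- all components strictly positive before t0
    have hpre : ∀ t, 0 ≤ t → t < t0 →
        0 < S t + ε * Real.exp (K * t) ∧ 0 < E t + ε * Real.exp (K * t) ∧
        0 < Q t + ε * Real.exp (K * t) ∧ 0 < A t + ε * Real.exp (K * t) ∧
        0 < I t + ε * Real.exp (K * t) ∧ 0 < J t + ε * Real.exp (K * t) ∧
        0 < R t + ε * Real.exp (K * t) := by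
      intro t ht0' htlt
      have htIcc : t ∈ Set.Icc (0:ℝ) T := ⟨ht0', htlt.le.trans ht0Icc.2⟩
      by_contra hcon2
      have hmem : t ∈ Bad := by
        refine ⟨htIcc, ?_⟩
        by_contra hd
        push_neg at hd
        exact hcon2 hd
      exact absurd (csInf_le hBadbdd hmem) (not_le.mpr htlt)
    -- limit argument: components nonneg at t0
    have hlim : ∀ X : ℝ → ℝ, Continuous X → (∀ t, 0 ≤ t → t < t0 → 0 < X t) →
        0 ≤ X t0 := by
      intro X hX hpos
      have h1 : Tendsto X (𝓝[<] t0) (𝓝 (X t0)) :=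
        (hX.tendsto t0).mono_left nhdsWithin_le_nhds
      refine ge_of_tendsto h1 ?_
      filter_upwards [Ioo_mem_nhdsLT_of_mem (Set.mem_Ioc.mpr ⟨ht0pos, le_refl t0⟩)]
        with t ht
      exact (hpos t ht.1.le ht.2).le
    have hySnn : 0 ≤ S t0 + ε * Real.exp (K * t0) :=
      hlim _ (by fun_prop) (fun t h1 h2 => (hpre t h1 h2).1)
    have hyEnn : 0 ≤ E t0 + ε * Real.exp (K * t0) :=
      hlim _ (by fun_prop) (fun t h1 h2 => (hpre t h1 h2).2.1)
    have hyQnn : 0 ≤ Q t0 + ε * Real.exp (K * t0) :=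
      hlim _ (by fun_prop) (fun t h1 h2 => (hpre t h1 h2).2.2.1)
    have hyAnn : 0 ≤ A t0 + ε * Real.exp (K * t0) :=
      hlim _ (by fun_prop) (fun t h1 h2 => (hpre t h1 h2).2.2.2.1)
    have hyInn : 0 ≤ I t0 + ε * Real.exp (K * t0) :=
      hlim _ (by fun_prop) (fun t h1 h2 => (hpre t h1 h2).2.2.2.2.1)
    have hyJnn : 0 ≤ J t0 + ε * Real.exp (K * t0) :=
      hlim _ (by fun_prop) (fun t h1 h2 => (hpre t h1 h2).2.2.2.2.2.1)
    have hyRnn : 0 ≤ R t0 + ε * Real.exp (K * t0) :=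
      hlim _ (by fun_prop) (fun t h1 h2 => (hpre t h1 h2).2.2.2.2.2.2)
    set m : ℝ := ε * Real.exp (K * t0) with hmdef
    have hm : 0 < m := by rw [hmdef]; positivity
    have hSm : -m ≤ S t0 := by linarith
    have hEm : -m ≤ E t0 := by linarith
    have hQm : -m ≤ Q t0 := by linarith
    have hAm : -m ≤ A t0 := by linarith
    have hIm : -m ≤ I t0 := by linarith
    have hJm : -m ≤ J t0 := by linarith
    have hRm : -m ≤ R t0 := by linarith
    obtain ⟨hBs, hBe, hBq, hBa, hBi, hBj, hBr⟩ := hB t0 ht0Icc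
    -- main contradiction machinery
    have hmain : ∀ X : ℝ → ℝ, Differentiable ℝ X → X t0 = -m →
        (∀ t, 0 ≤ t → t < t0 → 0 < X t + ε * Real.exp (K * t)) →
        -(K * m) < deriv X t0 → False := by
      intro X hXd hXt0 hXpos hd
      have hinner : HasDerivAt (fun t : ℝ => K * t) K t0 := by
        simpa using (hasDerivAt_id t0).const_mul K
      have hexp : HasDerivAt (fun t : ℝ => Real.exp (K * t))
          (Real.exp (K * t0) * K) t0 := (Real.hasDerivAt_exp (K * t0)).comp t0 hinner
      have hgd : HasDerivAt (fun t : ℝ => ε * Real.exp (K * t))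
          (ε * (Real.exp (K * t0) * K)) t0 := hexp.const_mul ε
      have hy : HasDerivAt (fun t : ℝ => X t + ε * Real.exp (K * t))
          (deriv X t0 + ε * (Real.exp (K * t0) * K)) t0 :=
        ((hXd t0).hasDerivAt).add hgd
      have hle : deriv X t0 + ε * (Real.exp (K * t0) * K) ≤ 0 := by
        refine left_min_deriv_nonpos' hy ht0pos ?_
        intro t ht
        have h1 : 0 < X t + ε * Real.exp (K * t) := hXpos t ht.1.le ht.2
        have h2 : X t0 + ε * Real.exp (K * t0) = 0 := by
          rw [hXt0, ← hmdef]; ring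
        show X t0 + ε * Real.exp (K * t0) ≤ X t + ε * Real.exp (K * t)
        linarith
      have h3 : ε * (Real.exp (K * t0) * K) = K * m := by rw [hmdef]; ring
      linarith
    -- values at t0
    set n : ℝ := S t0 + E t0 + Q t0 + A t0 + I t0 + J t0 + R t0 with hndef
    have hn : 0 < n := hNpos t0 ht0Icc
    have hnNm : Nm ≤ n := hNmle t0 ht0Icc
    set L : ℝ := beta * I t0 + rQ * beta * Q t0 + rA * beta * A t0 + rJ * beta * J t0
      with hLdef
    have hbQ : (0:ℝ) ≤ rQ * beta := by positivity
    have hbA : (0:ℝ) ≤ rA * beta := by positivity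
    have hbJ : (0:ℝ) ≤ rJ * beta := by positivity
    have hLub : L ≤ Cb * B := by
      rw [hLdef, hCbdef]
      exact sum4_ub _ _ _ _ _ _ _ _ _ hbeta.le hbQ hbA hbJ (abs_le.mp hBi).2
        (abs_le.mp hBq).2 (abs_le.mp hBa).2 (abs_le.mp hBj).2
    have hLlbB : -(Cb * B) ≤ L := by
      rw [hLdef, hCbdef]
      exact sum4_lb _ _ _ _ _ _ _ _ _ hbeta.le hbQ hbA hbJ (abs_le.mp hBi).1
        (abs_le.mp hBq).1 (abs_le.mp hBa).1 (abs_le.mp hBj).1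
    have hLlbm : -(Cb * m) ≤ L := by
      rw [hLdef, hCbdef]
      exact sum4_lb _ _ _ _ _ _ _ _ _ hbeta.le hbQ hbA hbJ hIm hQm hAm hJm
    have hSub : S t0 ≤ B := (abs_le.mp hBs).2
    -- case analysis on which component hits zero
    rcases ht0dis with hd | hd | hd | hd | hd | hd | hd
    · -- S hits zero
      have hX0 : S t0 = -m := by linarith
      refine hmain S hS hX0 (fun t h1 h2 => (hpre t h1 h2).1) ?_
      rw [hSode t0 ht0Icc, ← hndef, ← hLdef, hX0]
      have h1 : -M ≤ L / n := by
        rw [hMdef]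
        exact hdiv (Cb * B) L n (by positivity) hnNm hLlbB
      have h2 : -(m * M) ≤ m * (L / n) := by
        have := mul_le_mul_of_nonneg_left h1 hm.le
        linarith
      have h3 : Pi - -m * L / n - mu * -m = Pi + (m * (L / n)) - mu * -m := by ring
      rw [h3]
      exact case_lin Pi mu K M m (m * (L / n)) hPi.le hmu hm (by linarith) h2
    · -- E hits zero
      have hX0 : E t0 = -m := by linarith
      refine hmain E hE hX0 (fun t h1 h2 => (hpre t h1 h2).2.1) ?_
      rw [hEode t0 ht0Icc, ← hndef, ← hLdef, hX0]
      have hSL : -(m * (Cb * B)) ≤ S t0 * L :=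
        smul_lb (S t0) L Cb B m hCb hB0 hm hSub hSm hLub hLlbm
      have h1 : -(m * M) ≤ S t0 * L / n := by
        have := hdiv (m * (Cb * B)) (S t0 * L) n (by positivity) hnNm hSL
        rw [hMdef]
        calc -(m * (Cb * B / Nm)) = -(m * (Cb * B) / Nm) := by ring
        _ ≤ S t0 * L / n := this
      have hgoal : S t0 * L / n - (g1 + k1 + mu) * -m
          = 0 + S t0 * L / n - (g1 + k1 + mu) * -m := by ring
      rw [hgoal]
      exact case_lin 0 (g1 + k1 + mu) K M m (S t0 * L / n) le_rfl (by linarith) hm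
        (by linarith) h1
    · -- Q hits zero
      have hX0 : Q t0 = -m := by linarith
      refine hmain Q hQ hX0 (fun t h1 h2 => (hpre t h1 h2).2.2.1) ?_
      rw [hQode t0 ht0Icc, hX0]
      have := case_gen4 g1 0 0 0 (k2 + s1 + mu) K m (E t0) 0 0 0 hg1.le le_rfl le_rfl
        le_rfl (by linarith) hm (by rw [hKdef]; linarith) hEm (by linarith) (by linarith)
        (by linarith)
      linarith
    · -- A hits zero
      have hX0 : A t0 = -m := by linarith
      refine hmain A hA hX0 (fun t h1 h2 => (hpre t h1 h2).2.2.2.1) ?_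
      rw [hAode t0 ht0Icc, hX0]
      have hpk : p * k1 ≤ k1 := mul_le_of_le_one_left hk1.le hp1.le
      have := case_gen4 (p * k1) 0 0 0 (s2 + mu) K m (E t0) 0 0 0 (by positivity) le_rfl
        le_rfl le_rfl (by linarith) hm (by rw [hKdef]; linarith) hEm (by linarith)
        (by linarith) (by linarith)
      linarith
    · -- I hits zero
      have hX0 : I t0 = -m := by linarith
      refine hmain I hI hX0 (fun t h1 h2 => (hpre t h1 h2).2.2.2.2.1) ?_
      rw [hIode t0 ht0Icc, hX0]
      have hpk : (1 - p) * k1 ≤ k1 := mul_le_of_le_one_left hk1.le (by linarith)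
      have := case_gen4 ((1 - p) * k1) 0 0 0 (g2 + s3 + mu) K m (E t0) 0 0 0
        (mul_nonneg (by linarith) hk1.le) le_rfl le_rfl le_rfl (by linarith) hm
        (by rw [hKdef]; linarith) hEm (by linarith) (by linarith) (by linarith)
      linarith
    · -- J hits zero
      have hX0 : J t0 = -m := by linarith
      refine hmain J hJ hX0 (fun t h1 h2 => (hpre t h1 h2).2.2.2.2.2.1) ?_
      rw [hJode t0 ht0Icc, hX0]
      have := case_gen4 k2 g2 0 0 (delta + s4 + mu) K m (Q t0) (I t0) 0 0 hk2.le hg2.le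
        le_rfl le_rfl (by linarith) hm (by rw [hKdef]; linarith) hQm hIm (by linarith)
        (by linarith)
      linarith
    · -- R hits zero
      have hX0 : R t0 = -m := by linarith
      refine hmain R hR hX0 (fun t h1 h2 => (hpre t h1 h2).2.2.2.2.2.2) ?_
      rw [hRode t0 ht0Icc, hX0]
      have := case_gen4 s1 s2 s3 s4 mu K m (Q t0) (A t0) (I t0) (J t0) hs1.le hs2.le
        hs3.le hs4.le hmu hm (by rw [hKdef]; linarith) hQm hAm hIm hJm
      linarith
  -- conclude: take ε → 0
  have nn : ∀ x C : ℝ, 0 < C → (∀ ε : ℝ, 0 < ε → 0 < x + ε * C) → 0 ≤ x := by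
    intro x C hC h
    by_contra hx
    push_neg at hx
    have h1 := h (-x / (2 * C)) (div_pos (by linarith) (by positivity))
    have h2 : x + -x / (2 * C) * C = x / 2 := by field_simp; ring
    rw [h2] at h1
    linarith
  intro t ht
  have hC : 0 < Real.exp (K * t) := Real.exp_pos _
  refine ⟨?_, ?_, ?_, ?_, ?_, ?_, ?_⟩ <;>
    [ (refine nn _ _ hC fun ε hε => ?_; by_contra hle; push_neg at hle;
        exact key ε hε ⟨t, ht, Or.inl hle⟩);
      (refine nn _ _ hC fun ε hε => ?_; by_contra hle; push_neg at hle;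
        exact key ε hε ⟨t, ht, Or.inr (Or.inl hle)⟩);
      (refine nn _ _ hC fun ε hε => ?_; by_contra hle; push_neg at hle;
        exact key ε hε ⟨t, ht, Or.inr (Or.inr (Or.inl hle))⟩);
      (refine nn _ _ hC fun ε hε => ?_; by_contra hle; push_neg at hle;
        exact key ε hε ⟨t, ht, Or.inr (Or.inr (Or.inr (Or.inl hle)))⟩);
      (refine nn _ _ hC fun ε hε => ?_; by_contra hle; push_neg at hle;
        exact key ε hε ⟨t, ht, Or.inr (Or.inr (Or.inr (Or.inr (Or.inl hle))))⟩);
      (refine nn _ _ hC fun ε hε => ?_; by_contra hle; push_neg at hle;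
        exact key ε hε ⟨t, ht, Or.inr (Or.inr (Or.inr (Or.inr (Or.inr (Or.inl hle)))))⟩);
      (refine nn _ _ hC fun ε hε => ?_; by_contra hle; push_neg at hle;
        exact key ε hε ⟨t, ht, Or.inr (Or.inr (Or.inr (Or.inr (Or.inr (Or.inr hle)))))⟩)]
end

section
/- Let all parameters be positive reals with p ∈ (0,1), and set m1 = γ1+k1+μ, m2 = k2+σ1+μ, m3 = σ2+μ, m4 = γ2+σ3+μ, m5 = δ+σ4+μ. Let F be the 5×5 real matrix whose first row is (0, r_Qβ, r_Aβ, β, r_Jβ) and all other rows zero, and let V be the 5×5 matrix with rows (m1, 0, 0, 0, 0), (−γ1, m2, 0, 0, 0), (−p k1, 0, m3, 0, 0), (−(1−p)k1, 0, 0, m4, 0), (0, −k2, 0, −γ2, m5). Then V is invertible and the spectral radius of F V⁻¹ equals R_c := r_Qβγ1/(m1 m2) + r_Aβ p k1/(m1 m3) + β k1(1−p)/(m1 m4) + r_Jβγ1 k2/(m1 m2 m5) + r_Jβ(1−p)k1γ2/(m1 m4 m5). -/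
set_option maxHeartbeats 2000000
set_option maxRecDepth 8000

/-- The control reproduction number R_c is the spectral radius of the
next-generation matrix F V⁻¹: V is invertible, R_c is an eigenvalue of F V⁻¹,
and every (complex) eigenvalue of F V⁻¹ has modulus at most R_c. -/
theorem stmt_2
    (beta rQ rA rJ g1 g2 k1 k2 s1 s2 s3 s4 delta mu p : ℝ)
    (hbeta : 0 < beta) (hrQ : 0 < rQ) (hrA : 0 < rA) (hrJ : 0 < rJ)
    (hg1 : 0 < g1) (hg2 : 0 < g2) (hk1 : 0 < k1) (hk2 : 0 < k2)
    (hs1 : 0 < s1) (hs2 : 0 < s2) (hs3 : 0 < s3) (hs4 : 0 < s4)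
    (hdelta : 0 < delta) (hmu : 0 < mu) (hp0 : 0 < p) (hp1 : p < 1)
    (m1 m2 m3 m4 m5 : ℝ)
    (hm1 : m1 = g1 + k1 + mu) (hm2 : m2 = k2 + s1 + mu) (hm3 : m3 = s2 + mu)
    (hm4 : m4 = g2 + s3 + mu) (hm5 : m5 = delta + s4 + mu)
    (F V : Matrix (Fin 5) (Fin 5) ℝ)
    (hF : F = !![0, rQ * beta, rA * beta, beta, rJ * beta;
                 0, 0, 0, 0, 0;
                 0, 0, 0, 0, 0;
                 0, 0, 0, 0, 0;
                 0, 0, 0, 0, 0])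
    (hV : V = !![m1, 0, 0, 0, 0;
                 -g1, m2, 0, 0, 0;
                 -(p * k1), 0, m3, 0, 0;
                 -((1 - p) * k1), 0, 0, m4, 0;
                 0, -k2, 0, -g2, m5])
    (Rc : ℝ)
    (hRc : Rc = rQ * beta * g1 / (m1 * m2) + rA * beta * p * k1 / (m1 * m3)
      + beta * k1 * (1 - p) / (m1 * m4)
      + rJ * beta * g1 * k2 / (m1 * m2 * m5)
      + rJ * beta * (1 - p) * k1 * g2 / (m1 * m4 * m5)) :
    IsUnit V ∧
      (Rc : ℂ) ∈ spectrum ℂ ((F * V⁻¹).map Complex.ofReal) ∧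
      ∀ z ∈ spectrum ℂ ((F * V⁻¹).map Complex.ofReal), ‖z‖ ≤ Rc := by
  have hm1p : 0 < m1 := by rw [hm1]; positivity
  have hm2p : 0 < m2 := by rw [hm2]; positivity
  have hm3p : 0 < m3 := by rw [hm3]; positivity
  have hm4p : 0 < m4 := by rw [hm4]; positivity
  have hm5p : 0 < m5 := by rw [hm5]; positivity
  have h1p : 0 < 1 - p := by linarith
  have hRcpos : 0 < Rc := by rw [hRc]; positivity
  obtain ⟨W, hW⟩ : ∃ W : Matrix (Fin 5) (Fin 5) ℝ, W =
    !![1/m1, 0, 0, 0, 0;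
       g1/(m1*m2), 1/m2, 0, 0, 0;
       p*k1/(m1*m3), 0, 1/m3, 0, 0;
       (1-p)*k1/(m1*m4), 0, 0, 1/m4, 0;
       (k2*g1/(m1*m2) + g2*((1-p)*k1)/(m1*m4))/m5, k2/(m2*m5), 0, g2/(m4*m5), 1/m5] :=
    ⟨_, rfl⟩
  have hVW : V * W = 1 := by
    rw [hV, hW]
    ext i j
    fin_cases i <;> fin_cases j <;>
      (try simp [Matrix.mul_apply, Fin.sum_univ_five, Matrix.one_apply,
        Matrix.vecHead, Matrix.vecTail, Function.comp]) <;>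
      (try field_simp) <;> (try ring)
  have hVunit : IsUnit V := by
    rw [Matrix.isUnit_iff_isUnit_det]
    exact IsUnit.of_mul_eq_one W.det (by rw [← Matrix.det_mul, hVW, Matrix.det_one])
  have hVinv : V⁻¹ = W := Matrix.inv_eq_right_inv hVW
  obtain ⟨M, hM⟩ : ∃ M : Matrix (Fin 5) (Fin 5) ℝ, M = F * W := ⟨_, rfl⟩
  have hFVi : F * V⁻¹ = M := by rw [hVinv, hM]
  have hrow : ∀ i : Fin 5, i ≠ 0 → ∀ j, M i j = 0 := by
    intro i hi j
    have hFi : ∀ k, F i k = 0 := by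
      intro k
      rw [hF]
      fin_cases i
      · exact absurd rfl hi
      all_goals fin_cases k <;> simp [Matrix.vecHead, Matrix.vecTail, Pi.zero_apply]
    rw [hM]
    simp [Matrix.mul_apply, hFi]
  have hM00 : M 0 0 = Rc := by
    rw [hM, hF, hW]
    simp [Matrix.mul_apply, Fin.sum_univ_five, Matrix.vecHead, Matrix.vecTail]
    rw [hRc]
    field_simp
    ring
  obtain ⟨N, hN⟩ : ∃ N : Matrix (Fin 5) (Fin 5) ℂ, N = M.map Complex.ofReal := ⟨_, rfl⟩
  have hmap : (F * V⁻¹).map Complex.ofReal = N := by rw [hFVi, hN]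
  have hNrow : ∀ i : Fin 5, i ≠ 0 → ∀ j, N i j = 0 := by
    intro i hi j
    simp [hN, Matrix.map_apply, hrow i hi j]
  have hN00 : N 0 0 = (Rc : ℂ) := by simp [hN, Matrix.map_apply, hM00]
  have hNsq : N * N = (Rc : ℂ) • N := by
    ext i j
    rw [Matrix.mul_apply]
    have hsum : ∀ k : Fin 5, N i k * N k j = if k = 0 then N i 0 * N 0 j else 0 := by
      intro k
      by_cases hk : k = 0
      · simp [hk]
      · simp [hk, hNrow k hk j]
    rw [Finset.sum_congr rfl fun k _ => hsum k, Finset.sum_ite_eq' _ (0 : Fin 5)]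
    simp only [Finset.mem_univ, if_true, Matrix.smul_apply, smul_eq_mul]
    by_cases hi : i = 0
    · subst hi; rw [hN00]
    · rw [hNrow i hi 0, hNrow i hi j, zero_mul, mul_zero]
  rw [hmap]
  refine ⟨hVunit, ?_, ?_⟩
  · rw [spectrum.mem_iff]
    intro hu
    rw [Matrix.isUnit_iff_isUnit_det] at hu
    have hdet0 : ((algebraMap ℂ (Matrix (Fin 5) (Fin 5) ℂ)) (Rc : ℂ) - N).det = 0 := by
      apply Matrix.det_eq_zero_of_column_eq_zero 0
      intro i
      by_cases hi : i = 0
      · subst hi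
        simp [Matrix.algebraMap_eq_diagonal, Matrix.diagonal_apply, hN00]
      · simp [Matrix.algebraMap_eq_diagonal, Matrix.diagonal_apply, hi, hNrow i hi 0]
    rw [hdet0] at hu
    exact hu.ne_zero rfl
  · intro z hz
    have key : z * z - (Rc : ℂ) * z = 0 := by
      have hpoly : (Polynomial.aeval N) (Polynomial.X ^ 2 - Polynomial.C (Rc : ℂ) * Polynomial.X)
          = 0 := by
        simp only [map_sub, map_mul, map_pow, Polynomial.aeval_X, Polynomial.aeval_C]
        rw [pow_two, hNsq]
        simp [Algebra.algebraMap_eq_smul_one, smul_mul_assoc]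
      have hmem := spectrum.subset_polynomial_aeval N
        (Polynomial.X ^ 2 - Polynomial.C (Rc : ℂ) * Polynomial.X) ⟨z, hz, rfl⟩
      rw [hpoly, spectrum.zero_eq] at hmem
      simp only [Set.mem_singleton_iff, Polynomial.eval_sub, Polynomial.eval_mul,
        Polynomial.eval_pow, Polynomial.eval_X, Polynomial.eval_C, pow_two] at hmem
      linear_combination hmem
    have hfac : z * (z - (Rc : ℂ)) = 0 := by linear_combination key
    rcases mul_eq_zero.mp hfac with h | h
    · rw [h]; simpa using hRcpos.le
    · rw [sub_eq_zero.mp h]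
      simp [Complex.norm_real, abs_of_pos hRcpos]
end

section
/- Let all parameters be positive reals with p ∈ (0,1), and define m1 = γ1+k1+μ, m2 = k2+σ1+μ, m3 = σ2+μ, m4 = γ2+σ3+μ, m5 = δ+σ4+μ. Let J₀ be the 7×7 real matrix with rows (−μ, 0, −r_Qβ, −r_Aβ, −β, −r_Jβ, 0), (0, −m1, r_Qβ, r_Aβ, β, r_Jβ, 0), (0, γ1, −m2, 0, 0, 0, 0), (0, p k1, 0, −m3, 0, 0, 0), (0, (1−p)k1, 0, 0, −m4, 0, 0), (0, 0, k2, 0, γ2, −m5, 0), (0, 0, σ1, σ2, σ3, σ4, −μ). If R_c < 1, then every complex eigenvalue λ of J₀ satisfies Re(λ) < 0. -/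
open Finset

lemma gersh {n : ℕ} (M : Matrix (Fin n) (Fin n) ℝ) (d : Fin n → ℝ) (hd : ∀ i, 0 < d i)
    (h : ∀ i, M i i * d i + ∑ j ∈ Finset.univ.erase i, |M i j| * d j < 0) :
    ∀ z ∈ spectrum ℂ (M.map Complex.ofReal), z.re < 0 := by
  intro z hz
  rw [spectrum.mem_iff] at hz
  set M' := M.map (Complex.ofReal) with hM'
  have halg : algebraMap ℂ (Matrix (Fin n) (Fin n) ℂ) z = z • 1 := Algebra.algebraMap_eq_smul_one z
  have hdet : (z • (1 : Matrix (Fin n) (Fin n) ℂ) - M').det = 0 := by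
    by_contra hne
    exact hz (halg ▸ (Matrix.isUnit_iff_isUnit_det _).2 (Ne.isUnit hne))
  obtain ⟨v, hv0, hveq⟩ := (Matrix.exists_mulVec_eq_zero_iff).2 hdet
  have heig : ∀ i, ∑ j, (M i j : ℂ) * v j = z * v i := by
    intro i
    have h1 : M'.mulVec v = z • v := by
      have h2 := hveq
      rw [Matrix.sub_mulVec, Matrix.smul_mulVec, Matrix.one_mulVec, sub_eq_zero] at h2
      exact h2.symm
    have h2 := congrFun h1 i
    simpa [Matrix.mulVec, dotProduct, Matrix.map_apply, M'] using h2
  -- choose index maximizing ‖v j‖ / d j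
  obtain ⟨j0, hj0⟩ := Function.ne_iff.mp hv0
  obtain ⟨i, -, hi⟩ := Finset.exists_max_image Finset.univ (fun j => ‖v j‖ / d j)
    ⟨j0, Finset.mem_univ j0⟩
  have hvi : 0 < ‖v i‖ := by
    have h1 : 0 < ‖v j0‖ / d j0 := div_pos (by simpa using hj0) (hd j0)
    have h3 : 0 < ‖v i‖ / d i := lt_of_lt_of_le h1 (hi j0 (Finset.mem_univ j0))
    have h4 := mul_pos h3 (hd i)
    rwa [div_mul_cancel₀ _ (hd i).ne'] at h4
  have hkey : ∀ j, ‖v j‖ * d i ≤ ‖v i‖ * d j := by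
    intro j
    have := hi j (Finset.mem_univ j)
    rw [div_le_div_iff₀ (hd j) (hd i)] at this
    linarith
  -- Gershgorin estimate
  have hsplit : (z - (M i i : ℂ)) * v i = ∑ j ∈ Finset.univ.erase i, (M i j : ℂ) * v j := by
    have h1 := heig i
    rw [← Finset.add_sum_erase _ _ (Finset.mem_univ i)] at h1
    linear_combination -h1
  have hnorm : ‖z - (M i i : ℂ)‖ * ‖v i‖ ≤ ∑ j ∈ Finset.univ.erase i, |M i j| * ‖v j‖ := by
    rw [← norm_mul, hsplit]
    refine (norm_sum_le _ _).trans ?_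
    refine Finset.sum_le_sum fun j _ => ?_
    rw [norm_mul, Complex.norm_real]
    exact le_refl _
  -- multiply by d i and use the weight bound
  have hstep : (∑ j ∈ Finset.univ.erase i, |M i j| * ‖v j‖) * d i
      ≤ (∑ j ∈ Finset.univ.erase i, |M i j| * d j) * ‖v i‖ := by
    rw [Finset.sum_mul, Finset.sum_mul]
    refine Finset.sum_le_sum fun j _ => ?_
    have := hkey j
    have habs : 0 ≤ |M i j| := abs_nonneg _
    nlinarith
  have hDi := hd i
  have hlt : ‖z - (M i i : ℂ)‖ < -(M i i) := by
    have h2 := h i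
    have h3 : ‖z - (M i i : ℂ)‖ * ‖v i‖ * d i ≤ (∑ j ∈ Finset.univ.erase i, |M i j| * d j) * ‖v i‖ := by
      calc ‖z - (M i i : ℂ)‖ * ‖v i‖ * d i
          ≤ (∑ j ∈ Finset.univ.erase i, |M i j| * ‖v j‖) * d i := by nlinarith
        _ ≤ _ := hstep
    have h4 : (∑ j ∈ Finset.univ.erase i, |M i j| * d j) < -(M i i) * d i := by linarith
    by_contra hcon
    push_neg at hcon
    have h5 : (-(M i i)) * (‖v i‖ * d i) ≤ ‖z - (M i i : ℂ)‖ * (‖v i‖ * d i) :=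
      mul_le_mul_of_nonneg_right hcon (by positivity)
    have h6 : (∑ j ∈ Finset.univ.erase i, |M i j| * d j) * ‖v i‖ < (-(M i i) * d i) * ‖v i‖ :=
      mul_lt_mul_of_pos_right h4 hvi
    nlinarith
  have hre : z.re - M i i ≤ ‖z - (M i i : ℂ)‖ := by
    have := Complex.abs_re_le_norm (z - (M i i : ℂ))
    simp only [Complex.sub_re, Complex.ofReal_re] at this
    calc z.re - M i i ≤ |z.re - M i i| := le_abs_self _
      _ ≤ _ := this
  linarith


lemma vec7_five {α : Type*} (a b c d e f g : α) : ![a,b,c,d,e,f,g] 5 = f := rfl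
lemma vec7_six {α : Type*} (a b c d e f g : α) : ![a,b,c,d,e,f,g] 6 = g := rfl

set_option maxHeartbeats 2000000 in
/-- Local asymptotic stability of the DFE: if R_c < 1, every complex eigenvalue
of the Jacobian J₀ of model (2.1) at the disease-free equilibrium has negative
real part. -/
theorem stmt_3
    (beta rQ rA rJ g1 g2 k1 k2 s1 s2 s3 s4 delta mu p : ℝ)
    (hbeta : 0 < beta) (hrQ : 0 < rQ) (hrA : 0 < rA) (hrJ : 0 < rJ)
    (hg1 : 0 < g1) (hg2 : 0 < g2) (hk1 : 0 < k1) (hk2 : 0 < k2)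
    (hs1 : 0 < s1) (hs2 : 0 < s2) (hs3 : 0 < s3) (hs4 : 0 < s4)
    (hdelta : 0 < delta) (hmu : 0 < mu) (hp0 : 0 < p) (hp1 : p < 1)
    (m1 m2 m3 m4 m5 : ℝ)
    (hm1 : m1 = g1 + k1 + mu) (hm2 : m2 = k2 + s1 + mu) (hm3 : m3 = s2 + mu)
    (hm4 : m4 = g2 + s3 + mu) (hm5 : m5 = delta + s4 + mu)
    (J0 : Matrix (Fin 7) (Fin 7) ℝ)
    (hJ0 : J0 = !![-mu, 0, -(rQ * beta), -(rA * beta), -beta, -(rJ * beta), 0;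
                   0, -m1, rQ * beta, rA * beta, beta, rJ * beta, 0;
                   0, g1, -m2, 0, 0, 0, 0;
                   0, p * k1, 0, -m3, 0, 0, 0;
                   0, (1 - p) * k1, 0, 0, -m4, 0, 0;
                   0, 0, k2, 0, g2, -m5, 0;
                   0, 0, s1, s2, s3, s4, -mu])
    (Rc : ℝ)
    (hRc : Rc = rQ * beta * g1 / (m1 * m2) + rA * beta * p * k1 / (m1 * m3)
      + beta * k1 * (1 - p) / (m1 * m4)
      + rJ * beta * g1 * k2 / (m1 * m2 * m5)
      + rJ * beta * (1 - p) * k1 * g2 / (m1 * m4 * m5))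
    (hRclt : Rc < 1) :
    ∀ z ∈ spectrum ℂ (J0.map Complex.ofReal), z.re < 0 := by
  have hq : 0 < 1 - p := by linarith
  have hm1p : 0 < m1 := by rw [hm1]; positivity
  have hm2p : 0 < m2 := by rw [hm2]; positivity
  have hm3p : 0 < m3 := by rw [hm3]; positivity
  have hm4p : 0 < m4 := by rw [hm4]; positivity
  have hm5p : 0 < m5 := by rw [hm5]; positivity
  obtain ⟨C, hCdef⟩ : ∃ x : ℝ, x = beta * ((rQ + rA + 1) * m5 + rJ * (m5 + k2 + g2)) := ⟨_, rfl⟩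
  have hC : 0 < C := by rw [hCdef]; positivity
  obtain ⟨P, hPdef⟩ : ∃ x : ℝ, x = m1*m2*m3*m4*m5^2 - (rQ*beta*g1*m3*m4*m5^2 + rA*beta*p*k1*m2*m4*m5^2
      + beta*(1-p)*k1*m2*m3*m5^2 + rJ*beta*g1*k2*m3*m4*m5
      + rJ*beta*(1-p)*k1*g2*m2*m3*m5) := ⟨_, rfl⟩
  have hPeq : P = m1*m2*m3*m4*m5^2 * (1 - Rc) := by
    rw [hPdef, hRc]
    field_simp
  have hP : 0 < P := by
    rw [hPeq]
    have h1 : 0 < 1 - Rc := by linarith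
    positivity
  obtain ⟨D1, hD1⟩ : ∃ x : ℝ, x = 2*C*(m2*m3*m4*m5^2) := ⟨_, rfl⟩
  obtain ⟨D2, hD2⟩ : ∃ x : ℝ, x = m5*(2*C*(g1*m3*m4*m5) + P) := ⟨_, rfl⟩
  obtain ⟨D3, hD3⟩ : ∃ x : ℝ, x = m5*(2*C*(p*k1*m2*m4*m5) + P) := ⟨_, rfl⟩
  obtain ⟨D4, hD4⟩ : ∃ x : ℝ, x = m5*(2*C*((1-p)*k1*m2*m3*m5) + P) := ⟨_, rfl⟩
  obtain ⟨D5, hD5⟩ : ∃ x : ℝ, x = k2*(2*C*(g1*m3*m4*m5) + P) + g2*(2*C*((1-p)*k1*m2*m3*m5) + P) + P*m5 := ⟨_, rfl⟩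
  obtain ⟨D0, hD0⟩ : ∃ x : ℝ, x = (beta*(rQ*D2 + rA*D3 + D4 + rJ*D5))/mu + 1 := ⟨_, rfl⟩
  obtain ⟨D6, hD6⟩ : ∃ x : ℝ, x = (s1*D2 + s2*D3 + s3*D4 + s4*D5)/mu + 1 := ⟨_, rfl⟩
  have hD2p : 0 < D2 := by rw [hD2]; positivity
  have hD3p : 0 < D3 := by rw [hD3]; positivity
  have hD4p : 0 < D4 := by rw [hD4]; positivity
  have hD5p : 0 < D5 := by rw [hD5]; positivity
  have hD1p : 0 < D1 := by rw [hD1]; positivity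
  have hD0p : 0 < D0 := by
    rw [hD0]
    have h1 : 0 ≤ beta*(rQ*D2 + rA*D3 + D4 + rJ*D5) := by positivity
    have h2 := div_nonneg h1 hmu.le
    linarith
  have hD6p : 0 < D6 := by
    rw [hD6]
    have h1 : 0 ≤ s1*D2 + s2*D3 + s3*D4 + s4*D5 := by positivity
    have h2 := div_nonneg h1 hmu.le
    linarith
  obtain ⟨d, hd⟩ : ∃ x : Fin 7 → ℝ, x = ![D0, D1, D2, D3, D4, D5, D6] := ⟨_, rfl⟩
  have absL : ∀ x : ℝ, 0 < x → |x| = x := fun x hx => abs_of_pos hx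
  have row0 : J0 0 0 * d 0 + ∑ j ∈ Finset.univ.erase 0, |J0 0 j| * d j < 0 := by
    rw [hJ0, hd, Finset.sum_erase_eq_sub (Finset.mem_univ _), Fin.sum_univ_seven]
    show (-mu : ℝ) * D0 + (|(-mu : ℝ)| * D0 + |(0 : ℝ)| * D1 + |(-(rQ * beta) : ℝ)| * D2 + |(-(rA * beta) : ℝ)| * D3 + |(-beta : ℝ)| * D4 + |(-(rJ * beta) : ℝ)| * D5 + |(0 : ℝ)| * D6 - |(-mu : ℝ)| * D0) < 0
    simp only [abs_zero, abs_neg, absL mu hmu, absL beta hbeta, absL (rQ * beta) (by positivity : (0:ℝ) < rQ * beta), absL (rA * beta) (by positivity : (0:ℝ) < rA * beta), absL (rJ * beta) (by positivity : (0:ℝ) < rJ * beta)]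
    have e0 : -(mu * D0) + (rQ * beta * D2 + rA * beta * D3 + beta * D4 + rJ * beta * D5) = -mu := by
      rw [hD0]; field_simp; ring
    linarith [e0, hmu]
  have row1 : J0 1 1 * d 1 + ∑ j ∈ Finset.univ.erase 1, |J0 1 j| * d j < 0 := by
    rw [hJ0, hd, Finset.sum_erase_eq_sub (Finset.mem_univ _), Fin.sum_univ_seven]
    show (-m1 : ℝ) * D1 + (|(0 : ℝ)| * D0 + |(-m1 : ℝ)| * D1 + |(rQ * beta : ℝ)| * D2 + |(rA * beta : ℝ)| * D3 + |(beta : ℝ)| * D4 + |(rJ * beta : ℝ)| * D5 + |(0 : ℝ)| * D6 - |(-m1 : ℝ)| * D1) < 0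
    simp only [abs_zero, abs_neg, absL m1 hm1p, absL beta hbeta, absL (rQ * beta) (by positivity : (0:ℝ) < rQ * beta), absL (rA * beta) (by positivity : (0:ℝ) < rA * beta), absL (rJ * beta) (by positivity : (0:ℝ) < rJ * beta)]
    have e1 : -(m1 * D1) + (rQ * beta * D2 + rA * beta * D3 + beta * D4 + rJ * beta * D5) = -(C * P) := by
      rw [hD1, hD2, hD3, hD4, hD5, hPdef, hCdef]; ring
    linarith [e1, mul_pos hC hP]
  have row2 : J0 2 2 * d 2 + ∑ j ∈ Finset.univ.erase 2, |J0 2 j| * d j < 0 := by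
    rw [hJ0, hd, Finset.sum_erase_eq_sub (Finset.mem_univ _), Fin.sum_univ_seven]
    show (-m2 : ℝ) * D2 + (|(0 : ℝ)| * D0 + |(g1 : ℝ)| * D1 + |(-m2 : ℝ)| * D2 + |(0 : ℝ)| * D3 + |(0 : ℝ)| * D4 + |(0 : ℝ)| * D5 + |(0 : ℝ)| * D6 - |(-m2 : ℝ)| * D2) < 0
    simp only [abs_zero, abs_neg, absL m2 hm2p, absL g1 hg1]
    have e2 : g1 * D1 - m2 * D2 = -(m2 * m5 * P) := by rw [hD1, hD2]; ring
    linarith [e2, mul_pos (mul_pos hm2p hm5p) hP]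
  have row3 : J0 3 3 * d 3 + ∑ j ∈ Finset.univ.erase 3, |J0 3 j| * d j < 0 := by
    rw [hJ0, hd, Finset.sum_erase_eq_sub (Finset.mem_univ _), Fin.sum_univ_seven]
    show (-m3 : ℝ) * D3 + (|(0 : ℝ)| * D0 + |(p * k1 : ℝ)| * D1 + |(0 : ℝ)| * D2 + |(-m3 : ℝ)| * D3 + |(0 : ℝ)| * D4 + |(0 : ℝ)| * D5 + |(0 : ℝ)| * D6 - |(-m3 : ℝ)| * D3) < 0
    simp only [abs_zero, abs_neg, absL m3 hm3p, absL (p * k1) (by positivity : (0:ℝ) < p * k1)]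
    have e3 : p * k1 * D1 - m3 * D3 = -(m3 * m5 * P) := by rw [hD1, hD3]; ring
    linarith [e3, mul_pos (mul_pos hm3p hm5p) hP]
  have row4 : J0 4 4 * d 4 + ∑ j ∈ Finset.univ.erase 4, |J0 4 j| * d j < 0 := by
    rw [hJ0, hd, Finset.sum_erase_eq_sub (Finset.mem_univ _), Fin.sum_univ_seven]
    show (-m4 : ℝ) * D4 + (|(0 : ℝ)| * D0 + |((1 - p) * k1 : ℝ)| * D1 + |(0 : ℝ)| * D2 + |(0 : ℝ)| * D3 + |(-m4 : ℝ)| * D4 + |(0 : ℝ)| * D5 + |(0 : ℝ)| * D6 - |(-m4 : ℝ)| * D4) < 0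
    simp only [abs_zero, abs_neg, absL m4 hm4p, absL ((1 - p) * k1) (mul_pos hq hk1)]
    have e4 : (1 - p) * k1 * D1 - m4 * D4 = -(m4 * m5 * P) := by rw [hD1, hD4]; ring
    linarith [e4, mul_pos (mul_pos hm4p hm5p) hP]
  have row5 : J0 5 5 * d 5 + ∑ j ∈ Finset.univ.erase 5, |J0 5 j| * d j < 0 := by
    rw [hJ0, hd, Finset.sum_erase_eq_sub (Finset.mem_univ _), Fin.sum_univ_seven]
    show (-m5 : ℝ) * D5 + (|(0 : ℝ)| * D0 + |(0 : ℝ)| * D1 + |(k2 : ℝ)| * D2 + |(0 : ℝ)| * D3 + |(g2 : ℝ)| * D4 + |(-m5 : ℝ)| * D5 + |(0 : ℝ)| * D6 - |(-m5 : ℝ)| * D5) < 0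
    simp only [abs_zero, abs_neg, absL m5 hm5p, absL k2 hk2, absL g2 hg2]
    have e5 : k2 * D2 + g2 * D4 - m5 * D5 = -(m5 ^ 2 * P) := by rw [hD2, hD4, hD5]; ring
    linarith [e5, mul_pos (mul_pos hm5p hm5p) hP]
  have row6 : J0 6 6 * d 6 + ∑ j ∈ Finset.univ.erase 6, |J0 6 j| * d j < 0 := by
    rw [hJ0, hd, Finset.sum_erase_eq_sub (Finset.mem_univ _), Fin.sum_univ_seven]
    show (-mu : ℝ) * D6 + (|(0 : ℝ)| * D0 + |(0 : ℝ)| * D1 + |(s1 : ℝ)| * D2 + |(s2 : ℝ)| * D3 + |(s3 : ℝ)| * D4 + |(s4 : ℝ)| * D5 + |(-mu : ℝ)| * D6 - |(-mu : ℝ)| * D6) < 0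
    simp only [abs_zero, abs_neg, absL mu hmu, absL s1 hs1, absL s2 hs2, absL s3 hs3, absL s4 hs4]
    have e6 : -(mu * D6) + (s1 * D2 + s2 * D3 + s3 * D4 + s4 * D5) = -mu := by
      rw [hD6]; field_simp; ring
    linarith [e6, hmu]
  apply gersh J0 d
  · intro i
    fin_cases i
    · rw [hd]; exact hD0p
    · rw [hd]; exact hD1p
    · rw [hd]; exact hD2p
    · rw [hd]; exact hD3p
    · rw [hd]; exact hD4p
    · rw [hd]; exact hD5p
    · rw [hd]; exact hD6p
  · intro i
    fin_cases i
    · exact row0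
    · exact row1
    · exact row2
    · exact row3
    · exact row4
    · exact row5
    · exact row6
end

section
/- Let all parameters be positive reals with p ∈ (0,1), and define m1 = γ1+k1+μ, m2 = k2+σ1+μ, m3 = σ2+μ, m4 = γ2+σ3+μ, m5 = δ+σ4+μ. For λ ∈ ℂ with λ ∉ {−m1, −m2, −m3, −m4, −m5}, define G₁(λ) = r_Qβγ1/((λ+m1)(λ+m2)) + r_Aβ p k1/((λ+m1)(λ+m3)) + β k1(1−p)/((λ+m1)(λ+m4)) + r_Jβγ1k2/((λ+m1)(λ+m2)(λ+m5)) + r_Jβ(1−p)k1γ2/((λ+m1)(λ+m4)(λ+m5)). Then for every λ ∈ ℂ with Re(λ) ≥ 0 one has |G₁(λ)| ≤ G₁(0) = R_c. -/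
lemma aux_abs_ge (l : ℂ) (m : ℝ) (hl : 0 ≤ l.re) (hm : 0 < m) :
    m ≤ ‖l + m‖ := by
  calc m ≤ (l + (m:ℂ)).re := by simp; linarith
    _ ≤ |(l + (m:ℂ)).re| := le_abs_self _
    _ ≤ ‖l + m‖ := Complex.abs_re_le_norm _

lemma aux_ne (l : ℂ) (m : ℝ) (hl : 0 ≤ l.re) (hm : 0 < m) :
    l ≠ -(m : ℂ) := by
  intro h
  have := aux_abs_ge l m hl hm
  rw [h] at this
  simp at this
  linarith

lemma aux_term2 (c : ℝ) (hc : 0 ≤ c) (a b : ℂ) (ma mb : ℝ)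
    (hma : 0 < ma) (hmb : 0 < mb)
    (ha : ma ≤ ‖a‖) (hb : mb ≤ ‖b‖) :
    ‖(c : ℂ) / (a * b)‖ ≤ c / (ma * mb) := by
  rw [norm_div, norm_mul, Complex.norm_of_nonneg hc]
  apply div_le_div₀ hc le_rfl (by positivity)
  exact mul_le_mul ha hb hmb.le (norm_nonneg _)

lemma aux_term3 (c : ℝ) (hc : 0 ≤ c) (a b d : ℂ) (ma mb md : ℝ)
    (hma : 0 < ma) (hmb : 0 < mb) (hmd : 0 < md)
    (ha : ma ≤ ‖a‖) (hb : mb ≤ ‖b‖) (hd : md ≤ ‖d‖) :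
    ‖(c : ℂ) / (a * b * d)‖ ≤ c / (ma * mb * md) := by
  rw [norm_div, norm_mul, norm_mul, Complex.norm_of_nonneg hc]
  apply div_le_div₀ hc le_rfl (by positivity)
  exact mul_le_mul (mul_le_mul ha hb hmb.le (norm_nonneg _)) hd hmd.le
    (by positivity)

/-- For G₁ as in the stability proof for the DFE of model (2.1): for every λ ∈ ℂ
with Re(λ) ≥ 0 one has |G₁(λ)| ≤ G₁(0) = R_c. -/
theorem stmt_5
    (beta rQ rA rJ g1 g2 k1 k2 s1 s2 s3 s4 delta mu p : ℝ)
    (hbeta : 0 < beta) (hrQ : 0 < rQ) (hrA : 0 < rA) (hrJ : 0 < rJ)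
    (hg1 : 0 < g1) (hg2 : 0 < g2) (hk1 : 0 < k1) (hk2 : 0 < k2)
    (hs1 : 0 < s1) (hs2 : 0 < s2) (hs3 : 0 < s3) (hs4 : 0 < s4)
    (hdelta : 0 < delta) (hmu : 0 < mu) (hp0 : 0 < p) (hp1 : p < 1)
    (m1 m2 m3 m4 m5 : ℝ)
    (hm1 : m1 = g1 + k1 + mu) (hm2 : m2 = k2 + s1 + mu) (hm3 : m3 = s2 + mu)
    (hm4 : m4 = g2 + s3 + mu) (hm5 : m5 = delta + s4 + mu)
    (G1 : ℂ → ℂ)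
    (hG1 : ∀ l : ℂ,
      l ∉ ({-(m1 : ℂ), -(m2 : ℂ), -(m3 : ℂ), -(m4 : ℂ), -(m5 : ℂ)} : Set ℂ) →
      G1 l = (↑(rQ * beta * g1) : ℂ) / ((l + (m1 : ℂ)) * (l + (m2 : ℂ)))
        + (↑(rA * beta * p * k1) : ℂ) / ((l + (m1 : ℂ)) * (l + (m3 : ℂ)))
        + (↑(beta * k1 * (1 - p)) : ℂ) / ((l + (m1 : ℂ)) * (l + (m4 : ℂ)))
        + (↑(rJ * beta * g1 * k2) : ℂ) /
            ((l + (m1 : ℂ)) * (l + (m2 : ℂ)) * (l + (m5 : ℂ)))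
        + (↑(rJ * beta * (1 - p) * k1 * g2) : ℂ) /
            ((l + (m1 : ℂ)) * (l + (m4 : ℂ)) * (l + (m5 : ℂ))))
    (Rc : ℝ)
    (hRc : Rc = rQ * beta * g1 / (m1 * m2) + rA * beta * p * k1 / (m1 * m3)
      + beta * k1 * (1 - p) / (m1 * m4)
      + rJ * beta * g1 * k2 / (m1 * m2 * m5)
      + rJ * beta * (1 - p) * k1 * g2 / (m1 * m4 * m5)) :
    G1 0 = (Rc : ℂ) ∧ ∀ l : ℂ, 0 ≤ l.re → ‖G1 l‖ ≤ Rc := by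
  have hM1 : 0 < m1 := by rw [hm1]; linarith
  have hM2 : 0 < m2 := by rw [hm2]; linarith
  have hM3 : 0 < m3 := by rw [hm3]; linarith
  have hM4 : 0 < m4 := by rw [hm4]; linarith
  have hM5 : 0 < m5 := by rw [hm5]; linarith
  have hp' : 0 ≤ 1 - p := by linarith
  have hmem : ∀ l : ℂ, 0 ≤ l.re →
      l ∉ ({-(m1 : ℂ), -(m2 : ℂ), -(m3 : ℂ), -(m4 : ℂ), -(m5 : ℂ)} : Set ℂ) := by
    intro l hl hcon
    simp only [Set.mem_insert_iff, Set.mem_singleton_iff] at hcon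
    rcases hcon with h|h|h|h|h
    · exact aux_ne l m1 hl hM1 h
    · exact aux_ne l m2 hl hM2 h
    · exact aux_ne l m3 hl hM3 h
    · exact aux_ne l m4 hl hM4 h
    · exact aux_ne l m5 hl hM5 h
  constructor
  · rw [hG1 0 (hmem 0 (by simp)), hRc]
    push_cast
    ring
  · intro l hl
    rw [hG1 l (hmem l hl), hRc]
    have h1 := aux_abs_ge l m1 hl hM1
    have h2 := aux_abs_ge l m2 hl hM2
    have h3 := aux_abs_ge l m3 hl hM3
    have h4 := aux_abs_ge l m4 hl hM4
    have h5 := aux_abs_ge l m5 hl hM5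
    calc ‖_‖ ≤ _ := by
          apply le_trans (norm_add_le _ _)
          apply add_le_add
          apply le_trans (norm_add_le _ _)
          apply add_le_add
          apply le_trans (norm_add_le _ _)
          apply add_le_add
          apply le_trans (norm_add_le _ _)
          apply add_le_add
          · exact aux_term2 _ (by positivity) _ _ _ _ hM1 hM2 h1 h2
          · exact aux_term2 _ (by positivity) _ _ _ _ hM1 hM3 h1 h3
          · exact aux_term2 _ (by positivity) _ _ _ _ hM1 hM4 h1 h4
          · exact aux_term3 _ (by positivity) _ _ _ _ _ _ hM1 hM2 hM5 h1 h2 h5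
          · exact aux_term3 _ (by positivity) _ _ _ _ _ _ hM1 hM4 hM5 h1 h4 h5
      _ = _ := by ring
end

section
/- Let all parameters be positive reals with p ∈ (0,1), and define m1 = γ1+k1+μ, m2 = k2+σ1+μ, m3 = σ2+μ, m4 = γ2+σ3+μ, m5 = δ+σ4+μ. For real λ ≥ 0 define G₁(λ) = r_Qβγ1/((λ+m1)(λ+m2)) + r_Aβ p k1/((λ+m1)(λ+m3)) + β k1(1−p)/((λ+m1)(λ+m4)) + r_Jβγ1k2/((λ+m1)(λ+m2)(λ+m5)) + r_Jβ(1−p)k1γ2/((λ+m1)(λ+m4)(λ+m5)). If R_c = G₁(0) > 1, then there exists λ* > 0 with G₁(λ*) = 1. -/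
lemma aux_div2 (A x a b : ℝ) (hA : 0 ≤ A) (hx : 0 ≤ x) (ha : 0 < a) (hb : 0 < b) :
    A / ((x + a) * (x + b)) ≤ A / b / (x + a) := by
  rw [div_div]
  apply div_le_div_of_nonneg_left hA (by positivity)
  nlinarith

lemma aux_div3 (A x a b c : ℝ) (hA : 0 ≤ A) (hx : 0 ≤ x) (ha : 0 < a) (hb : 0 < b)
    (hc : 0 < c) : A / ((x + a) * (x + b) * (x + c)) ≤ A / (b * c) / (x + a) := by
  rw [div_div]
  apply div_le_div_of_nonneg_left hA (by positivity)
  nlinarith [mul_nonneg hx (mul_nonneg hx hx), mul_nonneg hx (mul_nonneg hx ha.le),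
    mul_nonneg hx (mul_nonneg hx hb.le), mul_nonneg hx (mul_nonneg hx hc.le),
    mul_nonneg hx (mul_nonneg ha.le hb.le), mul_nonneg hx (mul_nonneg ha.le hc.le)]

/-- If R_c = G₁(0) > 1 then the characteristic equation G₁(λ) = 1 has a
positive real root λ*. -/
theorem stmt_7
    (beta rQ rA rJ g1 g2 k1 k2 s1 s2 s3 s4 delta mu p : ℝ)
    (hbeta : 0 < beta) (hrQ : 0 < rQ) (hrA : 0 < rA) (hrJ : 0 < rJ)
    (hg1 : 0 < g1) (hg2 : 0 < g2) (hk1 : 0 < k1) (hk2 : 0 < k2)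
    (hs1 : 0 < s1) (hs2 : 0 < s2) (hs3 : 0 < s3) (hs4 : 0 < s4)
    (hdelta : 0 < delta) (hmu : 0 < mu) (hp0 : 0 < p) (hp1 : p < 1)
    (m1 m2 m3 m4 m5 : ℝ)
    (hm1 : m1 = g1 + k1 + mu) (hm2 : m2 = k2 + s1 + mu) (hm3 : m3 = s2 + mu)
    (hm4 : m4 = g2 + s3 + mu) (hm5 : m5 = delta + s4 + mu)
    (G1 : ℝ → ℝ)
    (hG1 : ∀ l : ℝ, 0 ≤ l →
      G1 l = rQ * beta * g1 / ((l + m1) * (l + m2))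
        + rA * beta * p * k1 / ((l + m1) * (l + m3))
        + beta * k1 * (1 - p) / ((l + m1) * (l + m4))
        + rJ * beta * g1 * k2 / ((l + m1) * (l + m2) * (l + m5))
        + rJ * beta * (1 - p) * k1 * g2 / ((l + m1) * (l + m4) * (l + m5)))
    (Rc : ℝ) (hRc : Rc = G1 0) (hRcgt : 1 < Rc) :
    ∃ l : ℝ, 0 < l ∧ G1 l = 1 := by
  have hm1' : 0 < m1 := by rw [hm1]; positivity
  have hm2' : 0 < m2 := by rw [hm2]; positivity
  have hm3' : 0 < m3 := by rw [hm3]; positivity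
  have hm4' : 0 < m4 := by rw [hm4]; positivity
  have hm5' : 0 < m5 := by rw [hm5]; positivity
  have hp' : 0 < 1 - p := by linarith
  clear hm1 hm2 hm3 hm4 hm5
  set f : ℝ → ℝ := fun l =>
      rQ * beta * g1 / ((l + m1) * (l + m2))
        + rA * beta * p * k1 / ((l + m1) * (l + m3))
        + beta * k1 * (1 - p) / ((l + m1) * (l + m4))
        + rJ * beta * g1 * k2 / ((l + m1) * (l + m2) * (l + m5))
        + rJ * beta * (1 - p) * k1 * g2 / ((l + m1) * (l + m4) * (l + m5))
    with hf
  obtain ⟨S, hS, hSpos⟩ : ∃ S : ℝ, S = rQ * beta * g1 / m2 + rA * beta * p * k1 / m3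
      + beta * k1 * (1 - p) / m4 + rJ * beta * g1 * k2 / (m2 * m5)
      + rJ * beta * (1 - p) * k1 * g2 / (m4 * m5) ∧ 0 < S :=
    ⟨_, rfl, by positivity⟩
  -- continuity of f on [0, S]
  have hcont : ContinuousOn f (Set.Icc 0 S) := by
    apply ContinuousOn.add; apply ContinuousOn.add; apply ContinuousOn.add
    apply ContinuousOn.add
    all_goals
      apply ContinuousOn.div (continuousOn_const) (by fun_prop)
      intro x hx
      have hx0 : 0 ≤ x := hx.1
      positivity
  -- f S < 1
  have hfS : f S < 1 := by
    have e1 := aux_div2 (rQ * beta * g1) S m1 m2 (by positivity) hSpos.le hm1' hm2'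
    have e2 := aux_div2 (rA * beta * p * k1) S m1 m3 (by positivity) hSpos.le hm1' hm3'
    have e3 := aux_div2 (beta * k1 * (1 - p)) S m1 m4 (by positivity) hSpos.le hm1' hm4'
    have e4 := aux_div3 (rJ * beta * g1 * k2) S m1 m2 m5 (by positivity) hSpos.le hm1' hm2' hm5'
    have e5 := aux_div3 (rJ * beta * (1 - p) * k1 * g2) S m1 m4 m5 (by positivity) hSpos.le hm1' hm4' hm5'
    have hS1 : 0 < S + m1 := by linarith
    have hsum : S / (S + m1) = rQ * beta * g1 / m2 / (S + m1)
        + rA * beta * p * k1 / m3 / (S + m1)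
        + beta * k1 * (1 - p) / m4 / (S + m1)
        + rJ * beta * g1 * k2 / (m2 * m5) / (S + m1)
        + rJ * beta * (1 - p) * k1 * g2 / (m4 * m5) / (S + m1) := by
      rw [hS]; ring
    have key : f S ≤ S / (S + m1) := by
      rw [hsum, hf]
      exact add_le_add (add_le_add (add_le_add (add_le_add e1 e2) e3) e4) e5
    have hlt : S / (S + m1) < 1 := by
      rw [div_lt_one hS1]; linarith
    exact lt_of_le_of_lt key hlt
  -- f 0 > 1
  have hf0 : 1 < f 0 := by
    have hf0e : f 0 = G1 0 := (hG1 0 le_rfl).symm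
    rw [hf0e, ← hRc]; exact hRcgt
  -- IVT
  have hmem : (1:ℝ) ∈ Set.Icc (f S) (f 0) := ⟨le_of_lt hfS, le_of_lt hf0⟩
  obtain ⟨c, hc, hfc⟩ := intermediate_value_Icc' (le_of_lt hSpos) hcont hmem
  refine ⟨c, ?_, ?_⟩
  · rcases lt_or_eq_of_le hc.1 with h | h
    · exact h
    · exfalso; rw [← h] at hfc; rw [hfc] at hf0; exact lt_irrefl 1 hf0
  · rw [hG1 c hc.1]; exact hfc
end

section
/- Let all parameters be positive reals with p ∈ (0,1). Consider the COVID-19 model (2.1). Call a point (S*, E*, Q*, A*, I*, J*, R*) ∈ ℝ⁷ with all seven coordinates strictly positive an endemic equilibrium if the right-hand side of system (2.1) vanishes at this point. Then: (i) if R_c > 1 the model has exactly one endemic equilibrium; (ii) if R_c ≤ 1 the model has no endemic equilibrium. -/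
/-- A point of ℝ⁷ with all coordinates strictly positive is an endemic equilibrium
of the COVID-19 model (2.1) if the right-hand side of the system vanishes there. -/
def IsEndemicEquilibrium
    (Pi beta rQ rA rJ g1 g2 k1 k2 s1 s2 s3 s4 delta mu p : ℝ)
    (x : ℝ × ℝ × ℝ × ℝ × ℝ × ℝ × ℝ) : Prop :=
  0 < x.1 ∧ 0 < x.2.1 ∧ 0 < x.2.2.1 ∧ 0 < x.2.2.2.1 ∧ 0 < x.2.2.2.2.1 ∧
    0 < x.2.2.2.2.2.1 ∧ 0 < x.2.2.2.2.2.2 ∧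
    (let S := x.1; let E := x.2.1; let Q := x.2.2.1; let A := x.2.2.2.1
     let I := x.2.2.2.2.1; let J := x.2.2.2.2.2.1; let R := x.2.2.2.2.2.2
     let N := S + E + Q + A + I + J + R
     Pi - S * (beta * I + rQ * beta * Q + rA * beta * A + rJ * beta * J) / N
        - mu * S = 0 ∧
      S * (beta * I + rQ * beta * Q + rA * beta * A + rJ * beta * J) / N
        - (g1 + k1 + mu) * E = 0 ∧
      g1 * E - (k2 + s1 + mu) * Q = 0 ∧
      p * k1 * E - (s2 + mu) * A = 0 ∧
      (1 - p) * k1 * E - (g2 + s3 + mu) * I = 0 ∧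
      k2 * Q + g2 * I - (delta + s4 + mu) * J = 0 ∧
      s1 * Q + s2 * A + s3 * I + s4 * J - mu * R = 0)

set_option maxHeartbeats 1000000 in
/-- Model (2.1) has a unique endemic equilibrium when R_c > 1 and none when
R_c ≤ 1. -/
theorem stmt_9
    (Pi beta rQ rA rJ g1 g2 k1 k2 s1 s2 s3 s4 delta mu p : ℝ)
    (hPi : 0 < Pi) (hbeta : 0 < beta) (hrQ : 0 < rQ) (hrA : 0 < rA) (hrJ : 0 < rJ)
    (hg1 : 0 < g1) (hg2 : 0 < g2) (hk1 : 0 < k1) (hk2 : 0 < k2)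
    (hs1 : 0 < s1) (hs2 : 0 < s2) (hs3 : 0 < s3) (hs4 : 0 < s4)
    (hdelta : 0 < delta) (hmu : 0 < mu) (hp0 : 0 < p) (hp1 : p < 1)
    (m1 m2 m3 m4 m5 : ℝ)
    (hm1 : m1 = g1 + k1 + mu) (hm2 : m2 = k2 + s1 + mu) (hm3 : m3 = s2 + mu)
    (hm4 : m4 = g2 + s3 + mu) (hm5 : m5 = delta + s4 + mu)
    (Rc : ℝ)
    (hRc : Rc = rQ * beta * g1 / (m1 * m2) + rA * beta * p * k1 / (m1 * m3)
      + beta * k1 * (1 - p) / (m1 * m4)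
      + rJ * beta * g1 * k2 / (m1 * m2 * m5)
      + rJ * beta * (1 - p) * k1 * g2 / (m1 * m4 * m5)) :
    (1 < Rc → ∃! x : ℝ × ℝ × ℝ × ℝ × ℝ × ℝ × ℝ,
        IsEndemicEquilibrium Pi beta rQ rA rJ g1 g2 k1 k2 s1 s2 s3 s4 delta mu p x) ∧
      (Rc ≤ 1 → ¬ ∃ x : ℝ × ℝ × ℝ × ℝ × ℝ × ℝ × ℝ,
        IsEndemicEquilibrium Pi beta rQ rA rJ g1 g2 k1 k2 s1 s2 s3 s4 delta mu p x) := by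
  have hp1' : (0:ℝ) < 1 - p := by linarith
  have hm1p : 0 < m1 := by rw [hm1]; positivity
  have hm2p : 0 < m2 := by rw [hm2]; positivity
  have hm3p : 0 < m3 := by rw [hm3]; positivity
  have hm4p : 0 < m4 := by rw [hm4]; positivity
  have hm5p : 0 < m5 := by rw [hm5]; positivity
  set q := g1 / m2 with hqdef
  set a := p * k1 / m3 with hadef
  set i := (1 - p) * k1 / m4 with hidef
  set j := (k2 * q + g2 * i) / m5 with hjdef
  set r := (s1 * q + s2 * a + s3 * i + s4 * j) / mu with hrdef
  have hqp : 0 < q := by rw [hqdef]; positivity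
  have hap : 0 < a := by rw [hadef]; positivity
  have hip : 0 < i := by rw [hidef]; positivity
  have hjp : 0 < j := by rw [hjdef]; positivity
  have hrp : 0 < r := by rw [hrdef]; positivity
  set w := 1 + q + a + i + j + r with hwdef
  have hwp : 0 < w := by rw [hwdef]; positivity
  -- key identity: m1 * Rc = beta * (i + rQ*q + rA*a + rJ*j)
  have hRcid : m1 * Rc = beta * (i + rQ * q + rA * a + rJ * j) := by
    rw [hRc, hjdef, hqdef, hadef, hidef]
    field_simp
    ring
  -- characterization of equilibria
  have hchar : ∀ S E Q A I J R : ℝ,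
      IsEndemicEquilibrium Pi beta rQ rA rJ g1 g2 k1 k2 s1 s2 s3 s4 delta mu p
        (S, E, Q, A, I, J, R) →
      0 < S ∧ 0 < E ∧ Q = q * E ∧ A = a * E ∧ I = i * E ∧ J = j * E ∧ R = r * E ∧
        mu * S = Pi - m1 * E ∧ S * (Rc - 1) = w * E := by
    intro S E Q A I J R hx
    rw [IsEndemicEquilibrium] at hx
    rw [← hm1, ← hm2, ← hm3, ← hm4, ← hm5] at hx
    obtain ⟨hS, hE, hQ, hA, hI, hJ, hR, h1, h2, h3, h4, h5, h6, h7⟩ := hx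
    simp only at h1 h2 h3 h4 h5 h6 h7
    have hQ' : Q = q * E := by
      rw [hqdef, div_mul_eq_mul_div, eq_div_iff hm2p.ne']
      linear_combination -h3
    have hA' : A = a * E := by
      rw [hadef, div_mul_eq_mul_div, eq_div_iff hm3p.ne']
      linear_combination -h4
    have hI' : I = i * E := by
      rw [hidef, div_mul_eq_mul_div, eq_div_iff hm4p.ne']
      linear_combination -h5
    have hJ' : J = j * E := by
      rw [hjdef, div_mul_eq_mul_div, eq_div_iff hm5p.ne']
      linear_combination -h6 + k2 * hQ' + g2 * hI'
    have hR' : R = r * E := by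
      rw [hrdef, div_mul_eq_mul_div, eq_div_iff hmu.ne']
      linear_combination -h7 + s1 * hQ' + s2 * hA' + s3 * hI' + s4 * hJ'
    have hSmu : mu * S = Pi - m1 * E := by linarith [h1, h2]
    have hN : (0:ℝ) < S + E + Q + A + I + J + R := by linarith
    have h2' : S * (beta * I + rQ * beta * Q + rA * beta * A + rJ * beta * J)
        = m1 * E * (S + E + Q + A + I + J + R) := by
      have := h2
      rw [sub_eq_zero, div_eq_iff hN.ne'] at this
      linarith [this]
    rw [hQ', hA', hI', hJ', hR'] at h2'
    have h9 : m1 * E * (S * (Rc - 1)) = m1 * E * (w * E) := by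
      linear_combination (S * E) * hRcid + h2' - (m1 * E * E) * hwdef
    have hcancel : S * (Rc - 1) = w * E :=
      mul_left_cancel₀ (by positivity : (m1 * E) ≠ 0) h9
    exact ⟨hS, hE, hQ', hA', hI', hJ', hR', hSmu, hcancel⟩
  constructor
  · -- existence and uniqueness when Rc > 1
    intro hRc1
    have hRcm : 0 < Rc - 1 := by linarith
    set D := mu * w + m1 * (Rc - 1) with hDdef
    have hDp : 0 < D := by rw [hDdef]; positivity
    set E0 := Pi * (Rc - 1) / D with hE0def
    have hE0p : 0 < E0 := by rw [hE0def]; positivity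
    set S0 := w * E0 / (Rc - 1) with hS0def
    have hS0p : 0 < S0 := by rw [hS0def]; positivity
    have hS0key : S0 * (Rc - 1) = w * E0 := by
      rw [hS0def]; field_simp
    have hmuS0 : mu * S0 = Pi - m1 * E0 := by
      rw [hS0def, hE0def]
      field_simp
      ring
    refine ⟨(S0, E0, q * E0, a * E0, i * E0, j * E0, r * E0), ?_, ?_⟩
    · simp only [IsEndemicEquilibrium]
      rw [← hm1, ← hm2, ← hm3, ← hm4, ← hm5]
      refine ⟨hS0p, hE0p, by positivity, by positivity, by positivity,
        by positivity, by positivity, ?_⟩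
      have hN0 : (0:ℝ) < S0 + E0 + q * E0 + a * E0 + i * E0 + j * E0 + r * E0 := by
        positivity
      have h2g : S0 * (beta * (i * E0) + rQ * beta * (q * E0) + rA * beta * (a * E0)
          + rJ * beta * (j * E0)) / (S0 + E0 + q * E0 + a * E0 + i * E0 + j * E0 + r * E0)
          = m1 * E0 := by
        rw [div_eq_iff hN0.ne']
        linear_combination (-(S0 * E0)) * hRcid + (m1 * E0) * hS0key
          + (m1 * E0 * E0) * hwdef
      refine ⟨by rw [h2g]; linarith, by rw [h2g]; ring, ?_, ?_, ?_, ?_, ?_⟩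
      · rw [hqdef]; field_simp; ring
      · rw [hadef]; field_simp; ring
      · rw [hidef]; field_simp; ring
      · rw [hjdef]; field_simp; ring
      · rw [hrdef]; field_simp; ring
    · rintro ⟨S, E, Q, A, I, J, R⟩ hx
      obtain ⟨hS, hE, hQ', hA', hI', hJ', hR', hSmu, hkey⟩ :=
        hchar S E Q A I J R hx
      have hEE : E = E0 := by
        rw [hE0def, eq_div_iff hDp.ne']
        linear_combination E * hDdef - mu * hkey + (Rc - 1) * hSmu
      have hSS : S = S0 := by
        have : mu * S = mu * S0 := by rw [hSmu, hmuS0, hEE]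
        exact mul_left_cancel₀ hmu.ne' this
      simp only [Prod.mk.injEq]
      refine ⟨hSS, hEE, ?_, ?_, ?_, ?_, ?_⟩ <;> rw [← hEE]
      · exact hQ'
      · exact hA'
      · exact hI'
      · exact hJ'
      · exact hR'
  · -- nonexistence when Rc ≤ 1
    rintro hRc1 ⟨⟨S, E, Q, A, I, J, R⟩, hx⟩
    obtain ⟨hS, hE, _, _, _, _, _, _, hkey⟩ := hchar S E Q A I J R hx
    have hwE : 0 < w * E := mul_pos hwp hE
    have hle : S * (Rc - 1) ≤ 0 :=
      mul_nonpos_of_nonneg_of_nonpos hS.le (by linarith)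
    linarith [hkey]
end

section
/- Let β, r_Q, r_A, r_J, γ2, k1, k2, σ1, σ2, σ3, σ4, δ, μ be positive reals and p ∈ (0,1). Regard R_c as a function of γ1 > 0: R_c(γ1) = r_Qβγ1/((γ1+k1+μ)(k2+σ1+μ)) + r_Aβ p k1/((γ1+k1+μ)(σ2+μ)) + β k1(1−p)/((γ1+k1+μ)(γ2+σ3+μ)) + r_Jβγ1k2/((γ1+k1+μ)(k2+σ1+μ)(δ+σ4+μ)) + r_Jβ(1−p)k1γ2/((γ1+k1+μ)(γ2+σ3+μ)(δ+σ4+μ)). Define r_{γ1} = ((k2+σ1+μ)/(k1+μ))·[ r_A p k1/(σ2+μ) + k1(1−p)/(γ2+σ3+μ) ] + (r_J(k2+σ1+μ)/((k1+μ)(δ+σ4+μ)))·[ (1−p)k1γ2/(γ2+σ3+μ) − k2(k1+μ)/(k2+σ1+μ) ]. Then for every γ1 > 0, the derivative dR_c/dγ1 is negative if and only if r_Q < r_{γ1}, and positive if and only if r_Q > r_{γ1}. -/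
lemma stmt_10_aux (beta rQ rA rJ g2 k1 k2 p q a b c e K : ℝ)
    (hq : q ≠ 0) (hA : a ≠ 0) (hB : b ≠ 0) (hC : c ≠ 0) (hE : e ≠ 0) (hK : K ≠ 0) :
    beta * K / (a * q) *
      (rQ - (a / K * (rA * p * k1 / b + k1 * (1 - p) / c)
      + rJ * a / (K * e) * ((1 - p) * k1 * g2 / c - k2 * K / a)))
    = rQ * beta * K / (a * q)
      + -(rA * beta * p * k1 / (b * q))
      + -(beta * k1 * (1 - p) / (c * q))
      + rJ * beta * k2 * K / (a * e * q)
      + -(rJ * beta * (1 - p) * k1 * g2 / (c * e * q)) := by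
  field_simp
  ring

set_option maxHeartbeats 800000 in
/-- Threshold analysis for quarantine: the derivative of R_c with respect to γ1 is
negative iff r_Q < r_{γ1} and positive iff r_Q > r_{γ1}. -/
theorem stmt_10
    (beta rQ rA rJ g2 k1 k2 s1 s2 s3 s4 delta mu p : ℝ)
    (hbeta : 0 < beta) (hrQ : 0 < rQ) (hrA : 0 < rA) (hrJ : 0 < rJ)
    (hg2 : 0 < g2) (hk1 : 0 < k1) (hk2 : 0 < k2)
    (hs1 : 0 < s1) (hs2 : 0 < s2) (hs3 : 0 < s3) (hs4 : 0 < s4)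
    (hdelta : 0 < delta) (hmu : 0 < mu) (hp0 : 0 < p) (hp1 : p < 1)
    (Rc : ℝ → ℝ)
    (hRc : ∀ x : ℝ, Rc x =
      rQ * beta * x / ((x + k1 + mu) * (k2 + s1 + mu))
      + rA * beta * p * k1 / ((x + k1 + mu) * (s2 + mu))
      + beta * k1 * (1 - p) / ((x + k1 + mu) * (g2 + s3 + mu))
      + rJ * beta * x * k2 / ((x + k1 + mu) * (k2 + s1 + mu) * (delta + s4 + mu))
      + rJ * beta * (1 - p) * k1 * g2 /
          ((x + k1 + mu) * (g2 + s3 + mu) * (delta + s4 + mu)))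
    (rg1 : ℝ)
    (hrg1 : rg1 = (k2 + s1 + mu) / (k1 + mu) *
        (rA * p * k1 / (s2 + mu) + k1 * (1 - p) / (g2 + s3 + mu))
      + rJ * (k2 + s1 + mu) / ((k1 + mu) * (delta + s4 + mu)) *
        ((1 - p) * k1 * g2 / (g2 + s3 + mu) - k2 * (k1 + mu) / (k2 + s1 + mu))) :
    ∀ x : ℝ, 0 < x →
      (deriv Rc x < 0 ↔ rQ < rg1) ∧ (0 < deriv Rc x ↔ rg1 < rQ) := by

  intro x hx
  have hD : (0:ℝ) < x + k1 + mu := by linarith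
  have hA : (0:ℝ) < k2 + s1 + mu := by linarith
  have hB : (0:ℝ) < s2 + mu := by linarith
  have hC : (0:ℝ) < g2 + s3 + mu := by linarith
  have hE : (0:ℝ) < delta + s4 + mu := by linarith
  have hDne := ne_of_gt hD
  have hAne := ne_of_gt hA
  have hBne := ne_of_gt hB
  have hCne := ne_of_gt hC
  have hEne := ne_of_gt hE
  have hKne : k1 + mu ≠ 0 := by positivity
  have hy : HasDerivAt (fun y : ℝ => y + k1 + mu) 1 x := by
    simpa using ((hasDerivAt_id x).add_const k1).add_const mu
  have h1 := (HasDerivAt.const_mul (rQ * beta) (hasDerivAt_id x)).div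
      (hy.mul_const (k2 + s1 + mu)) (by positivity)
  have h2 := (hasDerivAt_const x (rA * beta * p * k1)).div
      (hy.mul_const (s2 + mu)) (by positivity)
  have h3 := (hasDerivAt_const x (beta * k1 * (1 - p))).div
      (hy.mul_const (g2 + s3 + mu)) (by positivity)
  have h4 := ((HasDerivAt.const_mul (rJ * beta) (hasDerivAt_id x)).mul_const k2).div
      ((hy.mul_const (k2 + s1 + mu)).mul_const (delta + s4 + mu)) (by positivity)
  have h5 := (hasDerivAt_const x (rJ * beta * (1 - p) * k1 * g2)).div
      ((hy.mul_const (g2 + s3 + mu)).mul_const (delta + s4 + mu)) (by positivity)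
  have key : HasDerivAt Rc
      (beta * (k1 + mu) / ((k2 + s1 + mu) * (x + k1 + mu) ^ 2) * (rQ - rg1)) x := by
    have hfun : Rc = fun y : ℝ =>
        rQ * beta * y / ((y + k1 + mu) * (k2 + s1 + mu))
        + rA * beta * p * k1 / ((y + k1 + mu) * (s2 + mu))
        + beta * k1 * (1 - p) / ((y + k1 + mu) * (g2 + s3 + mu))
        + rJ * beta * y * k2 / ((y + k1 + mu) * (k2 + s1 + mu) * (delta + s4 + mu))
        + rJ * beta * (1 - p) * k1 * g2 /
            ((y + k1 + mu) * (g2 + s3 + mu) * (delta + s4 + mu)) := funext hRc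
    rw [hfun]
    have h1' : HasDerivAt (fun y : ℝ => rQ * beta * y / ((y + k1 + mu) * (k2 + s1 + mu)))
        (rQ * beta * (k1 + mu) / ((k2 + s1 + mu) * (x + k1 + mu) ^ 2)) x := by
      refine h1.congr_deriv ?_; simp only [id]; field_simp; ring
    have h2' : HasDerivAt (fun y : ℝ => rA * beta * p * k1 / ((y + k1 + mu) * (s2 + mu)))
        (-(rA * beta * p * k1 / ((s2 + mu) * (x + k1 + mu) ^ 2))) x := by
      refine h2.congr_deriv ?_; field_simp; ring
    have h3' : HasDerivAt (fun y : ℝ => beta * k1 * (1 - p) / ((y + k1 + mu) * (g2 + s3 + mu)))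
        (-(beta * k1 * (1 - p) / ((g2 + s3 + mu) * (x + k1 + mu) ^ 2))) x := by
      refine h3.congr_deriv ?_; field_simp; ring
    have h4' : HasDerivAt (fun y : ℝ =>
        rJ * beta * y * k2 / ((y + k1 + mu) * (k2 + s1 + mu) * (delta + s4 + mu)))
        (rJ * beta * k2 * (k1 + mu) /
          ((k2 + s1 + mu) * (delta + s4 + mu) * (x + k1 + mu) ^ 2)) x := by
      refine h4.congr_deriv ?_; simp only [id]; field_simp; ring
    have h5' : HasDerivAt (fun y : ℝ =>
        rJ * beta * (1 - p) * k1 * g2 / ((y + k1 + mu) * (g2 + s3 + mu) * (delta + s4 + mu)))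
        (-(rJ * beta * (1 - p) * k1 * g2 /
          ((g2 + s3 + mu) * (delta + s4 + mu) * (x + k1 + mu) ^ 2))) x := by
      refine h5.congr_deriv ?_; field_simp; ring
    have h := (((h1'.add h2').add h3').add h4').add h5'
    refine h.congr_deriv ?_
    rw [hrg1]
    exact (stmt_10_aux beta rQ rA rJ g2 k1 k2 p _ _ _ _ _ _
      (by positivity) hAne hBne hCne hEne hKne).symm
  have hder : deriv Rc x
      = beta * (k1 + mu) / ((k2 + s1 + mu) * (x + k1 + mu) ^ 2) * (rQ - rg1) := key.deriv
  have hc : 0 < beta * (k1 + mu) / ((k2 + s1 + mu) * (x + k1 + mu) ^ 2) := by positivity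
  rw [hder]
  constructor
  · constructor
    · intro h; nlinarith
    · intro h; nlinarith
  · constructor
    · intro h; nlinarith
    · intro h; nlinarith
end

section
/- Let β, r_Q, r_A, r_J, γ1, k1, k2, σ1, σ2, σ3, σ4, δ, μ be positive reals and p ∈ (0,1). Regard R_c as a function of γ2 > 0: R_c(γ2) = r_Qβγ1/((γ1+k1+μ)(k2+σ1+μ)) + r_Aβ p k1/((γ1+k1+μ)(σ2+μ)) + β k1(1−p)/((γ1+k1+μ)(γ2+σ3+μ)) + r_Jβγ1k2/((γ1+k1+μ)(k2+σ1+μ)(δ+σ4+μ)) + r_Jβ(1−p)k1γ2/((γ1+k1+μ)(γ2+σ3+μ)(δ+σ4+μ)). Define r_{γ2} = (δ+σ4+μ)/(σ3+μ). Then for every γ2 > 0, the derivative dR_c/dγ2 is negative if and only if r_J < r_{γ2}, and positive if and only if r_J > r_{γ2}. -/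
set_option maxHeartbeats 400000

private lemma aux_frac (K D c rJ y : ℝ) (hD : D ≠ 0) (hyc : y + c ≠ 0) :
    K / (y + c) + rJ * K * y / ((y + c) * D)
      = rJ * K / D + K * (1 - rJ * c / D) * (y + c)⁻¹ := by
  field_simp
  ring


/-- Threshold analysis for isolation: the derivative of R_c with respect to γ2 is
negative iff r_J < r_{γ2} and positive iff r_J > r_{γ2}, where
r_{γ2} = (δ+σ4+μ)/(σ3+μ). -/
theorem stmt_11
    (beta rQ rA rJ g1 k1 k2 s1 s2 s3 s4 delta mu p : ℝ)
    (hbeta : 0 < beta) (hrQ : 0 < rQ) (hrA : 0 < rA) (hrJ : 0 < rJ)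
    (hg1 : 0 < g1) (hk1 : 0 < k1) (hk2 : 0 < k2)
    (hs1 : 0 < s1) (hs2 : 0 < s2) (hs3 : 0 < s3) (hs4 : 0 < s4)
    (hdelta : 0 < delta) (hmu : 0 < mu) (hp0 : 0 < p) (hp1 : p < 1)
    (Rc : ℝ → ℝ)
    (hRc : ∀ x : ℝ, Rc x =
      rQ * beta * g1 / ((g1 + k1 + mu) * (k2 + s1 + mu))
      + rA * beta * p * k1 / ((g1 + k1 + mu) * (s2 + mu))
      + beta * k1 * (1 - p) / ((g1 + k1 + mu) * (x + s3 + mu))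
      + rJ * beta * g1 * k2 / ((g1 + k1 + mu) * (k2 + s1 + mu) * (delta + s4 + mu))
      + rJ * beta * (1 - p) * k1 * x /
          ((g1 + k1 + mu) * (x + s3 + mu) * (delta + s4 + mu)))
    (rg2 : ℝ)
    (hrg2 : rg2 = (delta + s4 + mu) / (s3 + mu)) :
    ∀ x : ℝ, 0 < x →
      (deriv Rc x < 0 ↔ rJ < rg2) ∧ (0 < deriv Rc x ↔ rg2 < rJ) := by
  intro x hx
  have hG : (0:ℝ) < g1 + k1 + mu := by positivity
  have hc : (0:ℝ) < s3 + mu := by positivity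
  have hD : (0:ℝ) < delta + s4 + mu := by positivity
  have hK : (0:ℝ) < beta * k1 * (1 - p) / (g1 + k1 + mu) := by
    apply div_pos _ hG; apply mul_pos (mul_pos hbeta hk1); linarith
  set K := beta * k1 * (1 - p) / (g1 + k1 + mu) with hKdef
  set C := rQ * beta * g1 / ((g1 + k1 + mu) * (k2 + s1 + mu))
      + rA * beta * p * k1 / ((g1 + k1 + mu) * (s2 + mu))
      + rJ * beta * g1 * k2 / ((g1 + k1 + mu) * (k2 + s1 + mu) * (delta + s4 + mu))
      + rJ * K / (delta + s4 + mu) with hCdef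
  set M := K * (1 - rJ * (s3 + mu) / (delta + s4 + mu)) with hMdef
  have hxc : (0:ℝ) < x + (s3 + mu) := by linarith
  have hxcne : x + (s3 + mu) ≠ 0 := ne_of_gt hxc
  have hderiv : deriv Rc x = M * (-1 / (x + (s3 + mu)) ^ 2) := by
    have hev : Rc =ᶠ[nhds x] fun y => C + M * (y + (s3 + mu))⁻¹ := by
      have hcont : ContinuousAt (fun y : ℝ => y + (s3 + mu)) x := by fun_prop
      filter_upwards [hcont.eventually_ne hxcne] with y hy
      have hy' : y + s3 + mu ≠ 0 := by
        intro h; apply hy; linarith [h]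
      rw [hRc y, hCdef, hMdef, show y + s3 + mu = y + (s3 + mu) by ring]
      have h35 := aux_frac K (delta + s4 + mu) (s3 + mu) rJ y (ne_of_gt hD) hy
      have e3 : beta * k1 * (1 - p) / ((g1 + k1 + mu) * (y + (s3 + mu)))
          = K / (y + (s3 + mu)) := by
        rw [hKdef, div_div]
      have e5 : rJ * beta * (1 - p) * k1 * y /
            ((g1 + k1 + mu) * (y + (s3 + mu)) * (delta + s4 + mu))
          = rJ * K * y / ((y + (s3 + mu)) * (delta + s4 + mu)) := by
        have hGne : (g1 + k1 + mu) ≠ 0 := ne_of_gt hG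
        have hDne : (delta + s4 + mu) ≠ 0 := ne_of_gt hD
        rw [hKdef]
        field_simp
      rw [e3, e5]
      linear_combination h35
    have hd : HasDerivAt (fun y : ℝ => C + M * (y + (s3 + mu))⁻¹)
        (M * (-1 / (x + (s3 + mu)) ^ 2)) x := by
      have h1 := ((hasDerivAt_id x).add_const (s3 + mu)).inv hxcne
      simpa using (h1.const_mul M).const_add C
    rw [hev.deriv_eq]
    exact hd.deriv
  have hsq : (0:ℝ) < 1 / (x + (s3 + mu)) ^ 2 := by positivity
  have hM : deriv Rc x = -M * (1 / (x + (s3 + mu)) ^ 2) := by rw [hderiv]; ring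
  have hMiff1 : 0 < M ↔ rJ < rg2 := by
    rw [hrg2, hMdef]
    constructor
    · intro h
      have ht : 0 < 1 - rJ * (s3 + mu) / (delta + s4 + mu) := by
        by_contra h'; push_neg at h'; nlinarith
      have h2 : rJ * (s3 + mu) < delta + s4 + mu :=
        (div_lt_one hD).mp (by linarith)
      exact (lt_div_iff₀ hc).mpr h2
    · intro h
      have h2 : rJ * (s3 + mu) < delta + s4 + mu := (lt_div_iff₀ hc).mp h
      have ht : rJ * (s3 + mu) / (delta + s4 + mu) < 1 := (div_lt_one hD).mpr h2
      exact mul_pos hK (by linarith)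
  have hMiff2 : M < 0 ↔ rg2 < rJ := by
    rw [hrg2, hMdef]
    constructor
    · intro h
      have ht : 1 - rJ * (s3 + mu) / (delta + s4 + mu) < 0 := by
        by_contra h'; push_neg at h'; nlinarith
      have h2 : delta + s4 + mu < rJ * (s3 + mu) :=
        (one_lt_div hD).mp (by linarith)
      exact (div_lt_iff₀ hc).mpr h2
    · intro h
      have h2 : delta + s4 + mu < rJ * (s3 + mu) := (div_lt_iff₀ hc).mp h
      have ht : 1 < rJ * (s3 + mu) / (delta + s4 + mu) := (one_lt_div hD).mpr h2
      exact mul_neg_of_pos_of_neg hK (by linarith)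
  have hMS : ∀ t : ℝ, 0 < t * (1 / (x + (s3 + mu)) ^ 2) ↔ 0 < t := by
    intro t
    constructor
    · intro h
      by_contra h'
      push_neg at h'
      have := mul_nonpos_of_nonpos_of_nonneg h' (le_of_lt hsq)
      linarith
    · intro h
      exact mul_pos h hsq
  have hMS2 : ∀ t : ℝ, t * (1 / (x + (s3 + mu)) ^ 2) < 0 ↔ t < 0 := by
    intro t
    constructor
    · intro h
      by_contra h'
      push_neg at h'
      have := mul_nonneg h' (le_of_lt hsq)
      linarith
    · intro h
      exact mul_neg_of_neg_of_pos h hsq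
  constructor
  · rw [hM, neg_mul, neg_lt_zero, hMS M, hMiff1]
  · rw [hM, neg_mul, neg_pos, hMS2 M, hMiff2]
end

section
/- Let β, r_A, k1, σ2, σ3, μ be positive reals and p ∈ (0,1). Let F be the 3×3 real matrix whose first row is (0, r_Aβ, β) and other rows zero, and let V be the 3×3 matrix with rows (k1+μ, 0, 0), (−p k1, σ2+μ, 0), (−(1−p)k1, 0, σ3+μ). Then V is invertible and the spectral radius of F V⁻¹ equals R₀ := r_Aβ p k1/((k1+μ)(σ2+μ)) + β k1(1−p)/((k1+μ)(σ3+μ)). -/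
lemma spec_aux (a b c z : ℂ) :
    z ∈ spectrum ℂ (!![a,b,c;(0:ℂ),0,0;0,0,0]) ↔ z = a ∨ z = 0 := by
  rw [spectrum.mem_iff, Matrix.isUnit_iff_isUnit_det, isUnit_iff_ne_zero, not_ne_iff]
  have he : algebraMap ℂ (Matrix (Fin 3) (Fin 3) ℂ) z - !![a,b,c;(0:ℂ),0,0;0,0,0]
      = !![z-a,-b,-c;0,z,0;0,0,z] := by
    ext i j
    fin_cases i <;> fin_cases j <;> simp [Matrix.algebraMap_matrix_apply, Matrix.vecHead, Matrix.vecTail]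
  have h : (!![z-a,-b,-c;(0:ℂ),z,0;0,0,z]).det = (z - a) * (z * z) := by
    simp [Matrix.det_fin_three, Matrix.vecHead, Matrix.vecTail]; ring
  rw [he, h, mul_eq_zero, mul_self_eq_zero, sub_eq_zero]

/-- The basic reproduction number R₀ of the model without control is the spectral
radius of the next-generation matrix F V⁻¹: V is invertible, R₀ is an eigenvalue
of F V⁻¹, and every (complex) eigenvalue of F V⁻¹ has modulus at most R₀. -/
theorem stmt_12
    (beta rA k1 s2 s3 mu p : ℝ)
    (hbeta : 0 < beta) (hrA : 0 < rA) (hk1 : 0 < k1)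
    (hs2 : 0 < s2) (hs3 : 0 < s3) (hmu : 0 < mu) (hp0 : 0 < p) (hp1 : p < 1)
    (F V : Matrix (Fin 3) (Fin 3) ℝ)
    (hF : F = !![0, rA * beta, beta;
                 0, 0, 0;
                 0, 0, 0])
    (hV : V = !![k1 + mu, 0, 0;
                 -(p * k1), s2 + mu, 0;
                 -((1 - p) * k1), 0, s3 + mu])
    (R0 : ℝ)
    (hR0 : R0 = rA * beta * p * k1 / ((k1 + mu) * (s2 + mu))
      + beta * k1 * (1 - p) / ((k1 + mu) * (s3 + mu))) :
    IsUnit V ∧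
      (R0 : ℂ) ∈ spectrum ℂ ((F * V⁻¹).map Complex.ofReal) ∧
      ∀ z ∈ spectrum ℂ ((F * V⁻¹).map Complex.ofReal), ‖z‖ ≤ R0 := by
  have hk : (0:ℝ) < k1 + mu := by linarith
  have h2 : (0:ℝ) < s2 + mu := by linarith
  have h3 : (0:ℝ) < s3 + mu := by linarith
  have hdet : V.det = (k1+mu)*((s2+mu)*(s3+mu)) := by
    subst hV; simp [Matrix.det_fin_three, Matrix.vecHead, Matrix.vecTail]; ring
  have hVu : IsUnit V := by
    rw [Matrix.isUnit_iff_isUnit_det, hdet]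
    exact isUnit_iff_ne_zero.mpr (by positivity)
  set W : Matrix (Fin 3) (Fin 3) ℝ :=
    !![(k1+mu)⁻¹, 0, 0;
       p*k1/((k1+mu)*(s2+mu)), (s2+mu)⁻¹, 0;
       (1-p)*k1/((k1+mu)*(s3+mu)), 0, (s3+mu)⁻¹] with hW
  have hVinv : V⁻¹ = W := by
    apply Matrix.inv_eq_right_inv
    subst hV
    rw [hW]
    ext i j
    fin_cases i <;> fin_cases j <;>
      simp [Matrix.mul_apply, Fin.sum_univ_three, Matrix.vecHead, Matrix.vecTail] <;> field_simp <;> ring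
  have hM : (F * V⁻¹).map Complex.ofReal =
      !![(R0:ℂ), (rA*beta/(s2+mu) : ℝ), (beta/(s3+mu) : ℝ); 0,0,0;0,0,0] := by
    subst hF; rw [hVinv, hW, hR0]
    ext i j
    fin_cases i <;> fin_cases j <;>
      simp [Matrix.mul_apply, Fin.sum_univ_three, Matrix.vecHead, Matrix.vecTail] <;> (try push_cast) <;> (try field_simp) <;> (try ring)
  have hR0nn : 0 ≤ R0 := by
    have h1p : (0:ℝ) ≤ 1 - p := by linarith
    rw [hR0]
    have t1 : (0:ℝ) ≤ rA * beta * p * k1 / ((k1 + mu) * (s2 + mu)) := by positivity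
    have t2 : (0:ℝ) ≤ beta * k1 * (1 - p) / ((k1 + mu) * (s3 + mu)) :=
      div_nonneg (mul_nonneg (by positivity) h1p) (by positivity)
    linarith
  refine ⟨hVu, ?_, ?_⟩
  · rw [hM]; exact (spec_aux _ _ _ _).mpr (Or.inl rfl)
  · intro z hz
    rw [hM] at hz
    rcases (spec_aux _ _ _ _).mp hz with h | h <;> subst h <;> simp [Complex.norm_real, Real.norm_eq_abs, abs_of_nonneg hR0nn, hR0nn]
end

section
/- Let β, r_A, k1, σ2, σ3, μ be positive reals and p ∈ (0,1). Let J₀ be the 5×5 real matrix with rows (−μ, 0, −r_Aβ, −β, 0), (0, −(k1+μ), r_Aβ, β, 0), (0, p k1, −(σ2+μ), 0, 0), (0, (1−p)k1, 0, −(σ3+μ), 0), (0, 0, σ2, σ3, −μ). If R₀ := r_Aβ p k1/((k1+μ)(σ2+μ)) + β k1(1−p)/((k1+μ)(σ3+μ)) < 1, then every complex eigenvalue λ of J₀ satisfies Re(λ) < 0. -/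
set_option maxRecDepth 8000
set_option maxHeartbeats 1000000

/-- Local asymptotic stability of the DFE of the model without control (3.3):
if R₀ < 1, every complex eigenvalue of the Jacobian J₀ at the disease-free
equilibrium has negative real part. -/
theorem stmt_13
    (beta rA k1 s2 s3 mu p : ℝ)
    (hbeta : 0 < beta) (hrA : 0 < rA) (hk1 : 0 < k1)
    (hs2 : 0 < s2) (hs3 : 0 < s3) (hmu : 0 < mu) (hp0 : 0 < p) (hp1 : p < 1)
    (J0 : Matrix (Fin 5) (Fin 5) ℝ)
    (hJ0 : J0 = !![-mu, 0, -(rA * beta), -beta, 0;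
                   0, -(k1 + mu), rA * beta, beta, 0;
                   0, p * k1, -(s2 + mu), 0, 0;
                   0, (1 - p) * k1, 0, -(s3 + mu), 0;
                   0, 0, s2, s3, -mu])
    (R0 : ℝ)
    (hR0 : R0 = rA * beta * p * k1 / ((k1 + mu) * (s2 + mu))
      + beta * k1 * (1 - p) / ((k1 + mu) * (s3 + mu)))
    (hR0lt : R0 < 1) :
    ∀ z ∈ spectrum ℂ (J0.map Complex.ofReal), z.re < 0 := by
  intro z hz
  set a : ℝ := rA * beta * (p * k1) with ha
  set b : ℝ := beta * ((1 - p) * k1) with hb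
  set A : ℝ := k1 + mu with hA
  set B : ℝ := s2 + mu with hB
  set C : ℝ := s3 + mu with hC
  have hA0 : 0 < A := by positivity
  have hB0 : 0 < B := by positivity
  have hC0 : 0 < C := by positivity
  have ha0 : 0 < a := by positivity
  have hb0 : 0 < b := mul_pos hbeta (mul_pos (by linarith) hk1)
  -- key real inequality from R0 < 1
  have hkey : a * C + b * B < A * B * C := by
    rw [hR0, div_add_div _ _ (by positivity) (by positivity),
      div_lt_one (by positivity)] at hR0lt
    nlinarith [hR0lt, mul_pos hA0 hB0, mul_pos hA0 hC0]
  -- determinant is zero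
  rw [spectrum.mem_iff] at hz
  have hdet : ((algebraMap ℂ (Matrix (Fin 5) (Fin 5) ℂ)) z - J0.map Complex.ofReal).det = 0 := by
    by_contra h
    exact hz ((Matrix.isUnit_iff_isUnit_det _).mpr (isUnit_iff_ne_zero.mpr h))
  have hM : (algebraMap ℂ (Matrix (Fin 5) (Fin 5) ℂ)) z - J0.map Complex.ofReal =
      !![z + mu, 0, rA * beta, beta, 0;
         0, z + A, -(rA * beta), -beta, 0;
         0, -(p * k1), z + B, 0, 0;
         0, -((1 - p) * k1), 0, z + C, 0;
         0, 0, -s2, -s3, z + mu] := by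
    subst hJ0
    ext i j
    fin_cases i <;> fin_cases j <;>
      simp [Matrix.algebraMap_matrix_apply, Matrix.vecHead, Matrix.vecTail, hA, hB, hC] <;>
      push_cast <;> ring
  rw [hM] at hdet
  have hdet2 : (z + (mu:ℂ))^2 *
      ((z + A) * (z + B) * (z + C) - (a:ℂ) * (z + C) - (b:ℂ) * (z + B)) = 0 := by
    rw [← hdet]
    simp [Matrix.det_succ_row_zero, Fin.sum_univ_succ, Fin.succAbove, ha, hb]
    push_cast
    ring
  rcases mul_eq_zero.mp hdet2 with h | h
  · have : z = -(mu:ℂ) := by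
      have := pow_eq_zero_iff (n := 2) (by norm_num) |>.mp h
      linear_combination this
    rw [this]
    simpa using hmu
  · -- g(z) = 0 case
    by_contra hre
    push_neg at hre
    have heq : (z + (A:ℂ)) * (z + B) * (z + C) = (a:ℂ) * (z + C) + (b:ℂ) * (z + B) := by
      linear_combination h
    set x := ‖z + (A:ℂ)‖ with hx
    set y := ‖z + (B:ℂ)‖ with hy
    set w := ‖z + (C:ℂ)‖ with hw
    have hxA : A ≤ x := by
      calc A ≤ (z + (A:ℂ)).re := by simp; linarith
        _ ≤ x := Complex.re_le_norm _
    have hyB : B ≤ y := by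
      calc B ≤ (z + (B:ℂ)).re := by simp; linarith
        _ ≤ y := Complex.re_le_norm _
    have hwC : C ≤ w := by
      calc C ≤ (z + (C:ℂ)).re := by simp; linarith
        _ ≤ w := Complex.re_le_norm _
    have hub : x * y * w ≤ a * w + b * y := by
      have h1 : x * y * w = ‖(z + (A:ℂ)) * (z + B) * (z + C)‖ := by
        rw [norm_mul, norm_mul]
      rw [h1, heq]
      calc ‖(a:ℂ) * (z + C) + (b:ℂ) * (z + B)‖
          ≤ ‖(a:ℂ) * (z + C)‖ + ‖(b:ℂ) * (z + B)‖ :=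
            norm_add_le _ _
        _ = a * w + b * y := by
            rw [norm_mul, norm_mul, Complex.norm_real, Complex.norm_real, Real.norm_eq_abs, Real.norm_eq_abs,
              abs_of_pos ha0, abs_of_pos hb0]
    have hy0 : 0 ≤ y := norm_nonneg _
    have hw0 : 0 ≤ w := norm_nonneg _
    have haAB : a < A * B := lt_of_mul_lt_mul_right (by nlinarith [mul_pos hb0 hB0]) hC0.le
    have hbAC : b < A * C := lt_of_mul_lt_mul_right (by nlinarith [mul_pos ha0 hC0]) hB0.le
    have h1 : 0 ≤ A * y - a := by nlinarith [mul_le_mul_of_nonneg_left hyB hA0.le]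
    have h2 : 0 ≤ A * C - b := by linarith
    nlinarith [mul_nonneg (sub_nonneg.2 hwC) h1, mul_nonneg (sub_nonneg.2 hyB) h2,
      mul_nonneg (sub_nonneg.2 hxA) (mul_nonneg hy0 hw0), hkey, hub]
end

section
/- Let β, r_A, k1, σ2, σ3, μ be positive reals and p ∈ (0,1). Let J₀ be the 5×5 real matrix with rows (−μ, 0, −r_Aβ, −β, 0), (0, −(k1+μ), r_Aβ, β, 0), (0, p k1, −(σ2+μ), 0, 0), (0, (1−p)k1, 0, −(σ3+μ), 0), (0, 0, σ2, σ3, −μ). If R₀ := r_Aβ p k1/((k1+μ)(σ2+μ)) + β k1(1−p)/((k1+μ)(σ3+μ)) > 1, then J₀ has a real eigenvalue λ* > 0. -/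
set_option maxHeartbeats 2000000 in
private lemma det5_aux (x mu k1 s2 s3 rA beta p : ℝ) :
    (!![x+mu, 0, rA*beta, beta, 0;
        0, x+(k1+mu), -(rA*beta), -beta, 0;
        0, -(p*k1), x+(s2+mu), 0, 0;
        0, -((1-p)*k1), 0, x+(s3+mu), 0;
        0, 0, -s2, -s3, x+mu] : Matrix (Fin 5) (Fin 5) ℝ).det
    = (x+mu)^2 * ((x+k1+mu)*(x+s2+mu)*(x+s3+mu)
        - rA*beta*p*k1*(x+s3+mu) - beta*(1-p)*k1*(x+s2+mu)) := by
  simp [Matrix.det_succ_row_zero, Fin.sum_univ_succ, Fin.succAbove, Fin.ext_iff]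
  ring

set_option maxHeartbeats 4000000 in
/-- Instability of the DFE of the model without control (3.3): if R₀ > 1, the
Jacobian J₀ at the disease-free equilibrium has a positive real eigenvalue. -/
theorem stmt_14
    (beta rA k1 s2 s3 mu p : ℝ)
    (hbeta : 0 < beta) (hrA : 0 < rA) (hk1 : 0 < k1)
    (hs2 : 0 < s2) (hs3 : 0 < s3) (hmu : 0 < mu) (hp0 : 0 < p) (hp1 : p < 1)
    (J0 : Matrix (Fin 5) (Fin 5) ℝ)
    (hJ0 : J0 = !![-mu, 0, -(rA * beta), -beta, 0;
                   0, -(k1 + mu), rA * beta, beta, 0;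
                   0, p * k1, -(s2 + mu), 0, 0;
                   0, (1 - p) * k1, 0, -(s3 + mu), 0;
                   0, 0, s2, s3, -mu])
    (R0 : ℝ)
    (hR0 : R0 = rA * beta * p * k1 / ((k1 + mu) * (s2 + mu))
      + beta * k1 * (1 - p) / ((k1 + mu) * (s3 + mu)))
    (hR0gt : 1 < R0) :
    ∃ l : ℝ, 0 < l ∧ l ∈ spectrum ℝ J0 := by
  have hkm : 0 < k1 + mu := by linarith
  have hs2m : 0 < s2 + mu := by linarith
  have hs3m : 0 < s3 + mu := by linarith
  set g : ℝ → ℝ := fun x => (x+k1+mu)*(x+s2+mu)*(x+s3+mu)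
      - rA*beta*p*k1*(x+s3+mu) - beta*(1-p)*k1*(x+s2+mu) with hgdef
  -- key inequality from R₀ > 1
  have key : (k1+mu)*(s2+mu)*(s3+mu)
      < rA*beta*p*k1*(s3+mu) + beta*(1-p)*k1*(s2+mu) := by
    rw [hR0, div_add_div _ _ (by positivity) (by positivity),
        lt_div_iff₀ (by positivity)] at hR0gt
    nlinarith [mul_pos hkm hs2m, mul_pos hkm hs3m, hkm]
  have hg0 : g 0 < 0 := by
    simp only [hgdef]
    nlinarith [key]
  set C : ℝ := rA*beta*p*k1 + beta*(1-p)*k1 + 1 with hCdef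
  have hA' : 0 < rA*beta*p*k1 := by positivity
  have hB' : 0 < beta*(1-p)*k1 := mul_pos (mul_pos hbeta (by linarith)) hk1
  have hC1 : 1 ≤ C := by simp only [hCdef]; linarith
  have hgC : 0 < g C := by
    simp only [hgdef]
    have h1 : 1 < C + s2 + mu := by linarith
    have h2 : 1 < C + s3 + mu := by linarith
    have hA : 0 ≤ rA*beta*p*k1 := by positivity
    have hB : 0 ≤ beta*(1-p)*k1 := by nlinarith
    -- rA*beta*p*k1*(C+s3+mu) ≤ (rA*beta*p*k1)*(C+s2+mu)*(C+s3+mu), etc.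
    nlinarith [mul_le_mul_of_nonneg_left (le_of_lt h1) (mul_nonneg hA (show (0:ℝ) ≤ C + s3 + mu by linarith)),
      mul_le_mul_of_nonneg_left (le_of_lt h2) (mul_nonneg hB (show (0:ℝ) ≤ C + s2 + mu by linarith)),
      mul_pos (mul_pos (show (0:ℝ) < C + s2 + mu by linarith) (show (0:ℝ) < C + s3 + mu by linarith)) hkm]
  -- intermediate value theorem
  have hcont : ContinuousOn g (Set.Icc 0 C) := (by fun_prop : Continuous g).continuousOn
  have h0C : (0:ℝ) ≤ C := by linarith
  have hIVT := intermediate_value_Icc h0C hcont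
  have hmem : (0:ℝ) ∈ Set.Icc (g 0) (g C) := ⟨hg0.le, hgC.le⟩
  obtain ⟨t, htIcc, htg⟩ := hIVT hmem
  have ht0 : 0 < t := by
    rcases lt_or_eq_of_le htIcc.1 with h | h
    · exact h
    · exfalso; rw [← h] at htg; rw [htg] at hg0; exact lt_irrefl 0 hg0
  refine ⟨t, ht0, ?_⟩
  rw [spectrum.mem_iff]
  have hER : algebraMap ℝ (Matrix (Fin 5) (Fin 5) ℝ) t - J0
      = !![t+mu, 0, rA*beta, beta, 0;
           0, t+(k1+mu), -(rA*beta), -beta, 0;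
           0, -(p*k1), t+(s2+mu), 0, 0;
           0, -((1-p)*k1), 0, t+(s3+mu), 0;
           0, 0, -s2, -s3, t+mu] := by
    subst hJ0
    ext i j
    fin_cases i <;> fin_cases j <;>
      simp [Matrix.algebraMap_eq_diagonal, Matrix.diagonal_apply, Matrix.vecHead, Matrix.vecTail] <;> ring
  rw [hER]
  intro hUnit
  have hdet := (Matrix.isUnit_iff_isUnit_det _).mp hUnit
  rw [det5_aux] at hdet
  have : ((t+mu)^2 * ((t+k1+mu)*(t+s2+mu)*(t+s3+mu)
      - rA*beta*p*k1*(t+s3+mu) - beta*(1-p)*k1*(t+s2+mu))) = 0 := by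
    rw [show (t+k1+mu)*(t+s2+mu)*(t+s3+mu)
      - rA*beta*p*k1*(t+s3+mu) - beta*(1-p)*k1*(t+s2+mu) = g t from rfl, htg, mul_zero]
  rw [this] at hdet
  exact (isUnit_iff_ne_zero.mp hdet) rfl
end

section
/- Let β, r_A, k1, σ2, σ3, μ be positive reals and p ∈ (0,1). For λ ∈ ℂ with λ ∉ {−(k1+μ), −(σ2+μ), −(σ3+μ)}, define G₂(λ) = r_Aβ p k1/((λ+k1+μ)(λ+σ2+μ)) + β k1(1−p)/((λ+k1+μ)(λ+σ3+μ)). Then for every λ ∈ ℂ with Re(λ) ≥ 0 one has |G₂(λ)| ≤ G₂(0) = R₀, where R₀ = r_Aβ p k1/((k1+μ)(σ2+μ)) + β k1(1−p)/((k1+μ)(σ3+μ)). -/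
lemma stmt_15_aux (l : ℂ) (hl : 0 ≤ l.re) (a : ℝ) (ha : 0 < a) :
    a ≤ ‖l + (a : ℂ)‖ := by
  calc a ≤ (l + (a : ℂ)).re := by simp; linarith
  _ ≤ ‖l + (a : ℂ)‖ := Complex.re_le_norm _

/-- For G₂ as in the stability proof for the DFE of the model without control:
for every λ ∈ ℂ with Re(λ) ≥ 0 one has |G₂(λ)| ≤ G₂(0) = R₀. -/
theorem stmt_15
    (beta rA k1 s2 s3 mu p : ℝ)
    (hbeta : 0 < beta) (hrA : 0 < rA) (hk1 : 0 < k1)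
    (hs2 : 0 < s2) (hs3 : 0 < s3) (hmu : 0 < mu) (hp0 : 0 < p) (hp1 : p < 1)
    (G2 : ℂ → ℂ)
    (hG2 : ∀ l : ℂ,
      l ∉ ({-((k1 : ℂ) + mu), -((s2 : ℂ) + mu), -((s3 : ℂ) + mu)} : Set ℂ) →
      G2 l = (↑(rA * beta * p * k1) : ℂ) /
          ((l + (k1 : ℂ) + (mu : ℂ)) * (l + (s2 : ℂ) + (mu : ℂ)))
        + (↑(beta * k1 * (1 - p)) : ℂ) /
          ((l + (k1 : ℂ) + (mu : ℂ)) * (l + (s3 : ℂ) + (mu : ℂ))))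
    (R0 : ℝ)
    (hR0 : R0 = rA * beta * p * k1 / ((k1 + mu) * (s2 + mu))
      + beta * k1 * (1 - p) / ((k1 + mu) * (s3 + mu))) :
    G2 0 = (R0 : ℂ) ∧ ∀ l : ℂ, 0 ≤ l.re → ‖G2 l‖ ≤ R0 := by
  have hmem : ∀ l : ℂ, 0 ≤ l.re →
      l ∉ ({-((k1 : ℂ) + mu), -((s2 : ℂ) + mu), -((s3 : ℂ) + mu)} : Set ℂ) := by
    intro l hl h
    simp only [Set.mem_insert_iff, Set.mem_singleton_iff] at h
    rcases h with h | h | h <;>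
    · rw [h] at hl
      simp [Complex.add_re] at hl
      linarith
  constructor
  · rw [hG2 0 (hmem 0 (by simp)), hR0]
    have e1 : ((0 : ℂ) + (k1:ℂ) + (mu:ℂ)) = ((k1 + mu : ℝ) : ℂ) := by push_cast; ring
    have e2 : ((0 : ℂ) + (s2:ℂ) + (mu:ℂ)) = ((s2 + mu : ℝ) : ℂ) := by push_cast; ring
    have e3 : ((0 : ℂ) + (s3:ℂ) + (mu:ℂ)) = ((s3 + mu : ℝ) : ℂ) := by push_cast; ring
    rw [e1, e2, e3, ← Complex.ofReal_mul, ← Complex.ofReal_mul, ← Complex.ofReal_div,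
      ← Complex.ofReal_div, ← Complex.ofReal_add]
  · intro l hl
    rw [hG2 l (hmem l hl)]
    have hk : k1 + mu ≤ ‖l + (k1:ℂ) + (mu:ℂ)‖ := by
      have := stmt_15_aux l hl (k1 + mu) (by linarith)
      rw [add_assoc]; push_cast at this ⊢; exact this
    have h2 : s2 + mu ≤ ‖l + (s2:ℂ) + (mu:ℂ)‖ := by
      have := stmt_15_aux l hl (s2 + mu) (by linarith)
      rw [add_assoc]; push_cast at this ⊢; exact this
    have h3 : s3 + mu ≤ ‖l + (s3:ℂ) + (mu:ℂ)‖ := by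
      have := stmt_15_aux l hl (s3 + mu) (by linarith)
      rw [add_assoc]; push_cast at this ⊢; exact this
    have habs := norm_add_le
      ((↑(rA * beta * p * k1) : ℂ) / ((l + (k1:ℂ) + (mu:ℂ)) * (l + (s2:ℂ) + (mu:ℂ))))
      ((↑(beta * k1 * (1 - p)) : ℂ) / ((l + (k1:ℂ) + (mu:ℂ)) * (l + (s3:ℂ) + (mu:ℂ))))
    refine habs.trans ?_
    rw [hR0]
    rw [norm_div, norm_div, norm_mul, norm_mul, Complex.norm_real, Complex.norm_real, Real.norm_eq_abs, Real.norm_eq_abs]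
    rw [abs_of_nonneg (by positivity), abs_of_nonneg (le_of_lt (mul_pos (mul_pos hbeta hk1) (by linarith : (0:ℝ) < 1 - p)))]
    gcongr
end
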